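/- arXiv:2009.05729 — 6 statements merged into one kernel-verified Lean document; each statement's English description precedes it below -/
import Mathlib

section
/- Let f : ℝ → ℝ be of bounded variation. Then the uncentered Hardy–Littlewood maximal function M̃f satisfies lim_{x→∞} M̃f(x) = lim_{x→−∞} M̃f(x) = max{ lim_{x→∞} |f|(x), lim_{x→−∞} |f|(x) }. -/
open MeasureTheory Filter Set Topology

/-- Average of |f| over the interval (a,b). -/
noncomputable def mAvg (f : ℝ → ℝ) (a b : ℝ) : ℝ := (∫ t in a..b, |f t|) / (b - a)

/-- Uncentered Hardy–Littlewood maximal function. -/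
noncomputable def uMax (f : ℝ → ℝ) (x : ℝ) : ℝ :=
  sSup {y | ∃ a b : ℝ, a < b ∧ a ≤ x ∧ x ≤ b ∧ y = mAvg f a b}

/-- f has bounded variation on ℝ. -/
def BVfun (f : ℝ → ℝ) : Prop := BoundedVariationOn f Set.univ

/-- Total variation of f over a set, as a real number. -/
noncomputable def varOn (f : ℝ → ℝ) (s : Set ℝ) : ℝ := (eVariationOn f s).toReal

/-- BV norm: |f(-∞)| + Var(f). -/
noncomputable def bvNorm (f : ℝ → ℝ) : ℝ :=
  |limUnder Filter.atBot f| + varOn f Set.univ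

/-- Upper precise representative: limsup over intervals I ∋ x with |I| → 0 of averages of |f|. -/
noncomputable def ubar (f : ℝ → ℝ) (x : ℝ) : ℝ :=
  ⨅ h : {h : ℝ // 0 < h},
    sSup {y | ∃ a b : ℝ, a < b ∧ a ≤ x ∧ x ≤ b ∧ b - a ≤ h.1 ∧ y = mAvg f a b}

/-- The open "interval" (a,b) in ℝ with extended-real endpoints. -/
noncomputable def erealIoo (a b : EReal) : Set ℝ := {x : ℝ | a < (x : EReal) ∧ (x : EReal) < b}

/-- Value of g at an extended-real point, understood as a limit at ±∞. -/
noncomputable def valAt (g : ℝ → ℝ) (a : EReal) : ℝ :=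
  if a = ⊥ then limUnder Filter.atBot g
  else if a = ⊤ then limUnder Filter.atTop g
  else g a.toReal

lemma absIntegrable {f : ℝ → ℝ} (hmeas : Measurable f) {M : ℝ} (hM : ∀ x, |f x| ≤ M)
    (a b : ℝ) : IntervalIntegrable (fun t => |f t|) volume a b := by
  rw [intervalIntegrable_iff]
  have hc : IntegrableOn (fun _ : ℝ => M) (Set.uIoc a b) volume := by
    refine integrableOn_const ?_
    rw [Set.uIoc]
    exact measure_Ioc_lt_top.ne
  refine hc.mono' hmeas.abs.aestronglyMeasurable ?_
  filter_upwards with x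
  simpa [abs_abs] using hM x

lemma avg_le {f : ℝ → ℝ} (hmeas : Measurable f) {M : ℝ} (hM : ∀ x, |f x| ≤ M)
    {a b C : ℝ} (hab : a < b) (hC : ∀ t ∈ Icc a b, |f t| ≤ C) : mAvg f a b ≤ C := by
  rw [mAvg, div_le_iff₀ (by linarith)]
  calc (∫ t in a..b, |f t|) ≤ ∫ _t in a..b, C :=
        intervalIntegral.integral_mono_on hab.le (absIntegrable hmeas hM a b)
          intervalIntegrable_const hC
    _ = C * (b - a) := by simp [mul_comm]

lemma le_avg {f : ℝ → ℝ} (hmeas : Measurable f) {M : ℝ} (hM : ∀ x, |f x| ≤ M)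
    {a b C : ℝ} (hab : a < b) (hC : ∀ t ∈ Icc a b, C ≤ |f t|) : C ≤ mAvg f a b := by
  rw [mAvg, le_div_iff₀ (by linarith)]
  calc C * (b - a) = ∫ _t in a..b, C := by simp [mul_comm]
    _ ≤ ∫ t in a..b, |f t| :=
        intervalIntegral.integral_mono_on hab.le intervalIntegrable_const
          (absIntegrable hmeas hM a b) hC

lemma avg_nonneg {f : ℝ → ℝ} {a b : ℝ} (hab : a < b) : 0 ≤ mAvg f a b :=
  div_nonneg (intervalIntegral.integral_nonneg hab.le (fun t _ => abs_nonneg _)) (by linarith)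

lemma uMax_nonempty (f : ℝ → ℝ) (x : ℝ) :
    (mAvg f (x - 1) (x + 1)) ∈ {y | ∃ a b : ℝ, a < b ∧ a ≤ x ∧ x ≤ b ∧ y = mAvg f a b} :=
  ⟨x - 1, x + 1, by linarith, by linarith, by linarith, rfl⟩

lemma uMax_bddAbove {f : ℝ → ℝ} (hmeas : Measurable f) {M : ℝ} (hM : ∀ x, |f x| ≤ M) (x : ℝ) :
    BddAbove {y | ∃ a b : ℝ, a < b ∧ a ≤ x ∧ x ≤ b ∧ y = mAvg f a b} := by
  refine ⟨M, ?_⟩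
  rintro y ⟨a, b, hab, -, -, rfl⟩
  exact avg_le hmeas hM hab (fun t _ => hM t)

lemma le_uMax {f : ℝ → ℝ} (hmeas : Measurable f) {M : ℝ} (hM : ∀ x, |f x| ≤ M)
    {x a b : ℝ} (hab : a < b) (hax : a ≤ x) (hxb : x ≤ b) : mAvg f a b ≤ uMax f x :=
  le_csSup (uMax_bddAbove hmeas hM x) ⟨a, b, hab, hax, hxb, rfl⟩

lemma uMax_le {f : ℝ → ℝ} {x C : ℝ}
    (h : ∀ a b : ℝ, a < b → a ≤ x → x ≤ b → mAvg f a b ≤ C) : uMax f x ≤ C := by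
  refine csSup_le ⟨_, uMax_nonempty f x⟩ ?_
  rintro y ⟨a, b, hab, hax, hxb, rfl⟩
  exact h a b hab hax hxb

lemma uMax_nonneg {f : ℝ → ℝ} (hmeas : Measurable f) {M : ℝ} (hM : ∀ x, |f x| ≤ M) (x : ℝ) :
    0 ≤ uMax f x :=
  le_trans (avg_nonneg (f := f) (a := x - 1) (b := x + 1) (by linarith))
    (le_uMax hmeas hM (by linarith) (by linarith) (by linarith))

set_option maxHeartbeats 1000000 in
lemma key (f : ℝ → ℝ) (hmeas : Measurable f) (M : ℝ) (hM : ∀ x, |f x| ≤ M)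
    (cp cm : ℝ) (hp : Tendsto (fun x => |f x|) atTop (𝓝 cp))
    (hm : Tendsto (fun x => |f x|) atBot (𝓝 cm)) :
    Tendsto (uMax f) atTop (𝓝 (max cp cm)) := by
  have hM0 : 0 ≤ M := le_trans (abs_nonneg _) (hM 0)
  have hcp0 : 0 ≤ cp := ge_of_tendsto' hp (fun x => abs_nonneg _)
  set L := max cp cm with hLdef
  have hL0 : 0 ≤ L := le_trans hcp0 (le_max_left _ _)
  rw [Metric.tendsto_atTop]
  intro ε hε
  obtain ⟨N1, hN1⟩ := Metric.tendsto_atTop.1 hp (ε/4) (by linarith)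
  obtain ⟨N2, hN2⟩ := Metric.tendsto_atTop.1 (hm.comp tendsto_neg_atTop_atBot) (ε/4) (by linarith)
  set N : ℝ := max 1 (max N1 N2) with hNdef
  have hN1' : ∀ t : ℝ, N ≤ t → cp - ε/4 ≤ |f t| ∧ |f t| ≤ cp + ε/4 := by
    intro t ht
    have := hN1 t (le_trans (le_trans (le_max_left _ _) (le_max_right 1 _)) ht)
    rw [Real.dist_eq, abs_sub_lt_iff] at this
    constructor <;> linarith [this.1, this.2]
  have hN2' : ∀ t : ℝ, t ≤ -N → cm - ε/4 ≤ |f t| ∧ |f t| ≤ cm + ε/4 := by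
    intro t ht
    have := hN2 (-t) ?_
    · rw [Function.comp_apply, neg_neg, Real.dist_eq, abs_sub_lt_iff] at this
      constructor <;> linarith [this.1, this.2]
    · have : N2 ≤ N := le_trans (le_max_right N1 _) (le_max_right 1 _)
      linarith
  have hNpos : (0:ℝ) < N := lt_of_lt_of_le one_pos (le_max_left _ _)
  have hup : ∀ t : ℝ, N ≤ t → |f t| ≤ L + ε/4 := fun t ht =>
    le_trans (hN1' t ht).2 (by have := le_max_left cp cm; simp only [hLdef]; linarith)
  have hdown : ∀ t : ℝ, t ≤ -N → |f t| ≤ L + ε/4 := fun t ht =>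
    le_trans (hN2' t ht).2 (by have := le_max_right cp cm; simp only [hLdef]; linarith)
  set X : ℝ := N + 1 + 8*N*M/ε with hXdef
  have hXN : N + 1 ≤ X := by
    have : 0 ≤ 8*N*M/ε := by positivity
    simp only [hXdef]; linarith
  refine ⟨X, fun x hx => ?_⟩
  have hxN : N < x := by linarith
  -- upper bound
  have hub : uMax f x ≤ L + ε/2 := by
    refine uMax_le ?_
    intro a b hab hax hxb
    by_cases hA : N ≤ a
    · have : mAvg f a b ≤ L + ε/4 := avg_le hmeas hM hab (fun t ht => hup t (le_trans hA ht.1))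
      linarith
    · push_neg at hA
      have hbX : X ≤ b := le_trans hx hxb
      have hba : X - N ≤ b - a := by linarith
      have hNb : N ≤ b := by linarith
      have hIab : ∀ u v : ℝ, IntervalIntegrable (fun t => |f t|) volume u v :=
        absIntegrable hmeas hM
      have hint : (∫ t in a..b, |f t|) ≤ (L + ε/4) * (b - a) + 2*N*M := by
        by_cases hB : -N ≤ a
        · have hsplit : (∫ t in a..N, |f t|) + (∫ t in N..b, |f t|) = ∫ t in a..b, |f t| :=
            intervalIntegral.integral_add_adjacent_intervals (hIab a N) (hIab N b)
          have h1 : (∫ t in a..N, |f t|) ≤ M * (N - a) := by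
            have := avg_le hmeas hM hA (fun t _ => hM t)
            rw [mAvg, div_le_iff₀ (by linarith)] at this
            linarith
          have h2 : (∫ t in N..b, |f t|) ≤ (L + ε/4) * (b - N) := by
            rcases eq_or_lt_of_le hNb with h | h
            · simp [← h]
            · have := avg_le hmeas hM h (fun t ht => hup t ht.1)
              rw [mAvg, div_le_iff₀ (by linarith)] at this
              linarith
          have e1 : (L + ε/4) * (b - N) ≤ (L + ε/4) * (b - a) :=
            mul_le_mul_of_nonneg_left (by linarith) (by linarith)
          have e2 : M * (N - a) ≤ M * (2*N) :=
            mul_le_mul_of_nonneg_left (by linarith) hM0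
          linarith
        · push_neg at hB
          have hsplit1 : (∫ t in a..(-N), |f t|) + (∫ t in (-N)..b, |f t|) = ∫ t in a..b, |f t| :=
            intervalIntegral.integral_add_adjacent_intervals (hIab a (-N)) (hIab (-N) b)
          have hsplit2 : (∫ t in (-N)..N, |f t|) + (∫ t in N..b, |f t|) = ∫ t in (-N)..b, |f t| :=
            intervalIntegral.integral_add_adjacent_intervals (hIab (-N) N) (hIab N b)
          have h1 : (∫ t in a..(-N), |f t|) ≤ (L + ε/4) * ((-N) - a) := by
            have := avg_le hmeas hM hB (fun t ht => hdown t ht.2)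
            rw [mAvg, div_le_iff₀ (by linarith)] at this
            linarith
          have h2 : (∫ t in (-N)..N, |f t|) ≤ M * (N - (-N)) := by
            have := avg_le hmeas hM (show -N < N by linarith) (fun t _ => hM t)
            rw [mAvg, div_le_iff₀ (by linarith)] at this
            linarith
          have h3 : (∫ t in N..b, |f t|) ≤ (L + ε/4) * (b - N) := by
            rcases eq_or_lt_of_le hNb with h | h
            · simp [← h]
            · have := avg_le hmeas hM h (fun t ht => hup t ht.1)
              rw [mAvg, div_le_iff₀ (by linarith)] at this
              linarith
          have e1 : (L + ε/4) * ((-N) - a) + (L + ε/4) * (b - N) ≤ (L + ε/4) * (b - a) := by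
            have : (L + ε/4) * ((b - a) - 2*N) ≤ (L + ε/4) * (b - a) :=
              mul_le_mul_of_nonneg_left (by linarith) (by linarith)
            nlinarith
          linarith
      rw [mAvg, div_le_iff₀ (by linarith)]
      have h4 : 2*N*M ≤ ε/4 * (b - a) := by
        have : 8*N*M/ε ≤ b - a := by simp only [hXdef] at hba; linarith
        rw [div_le_iff₀ hε] at this
        nlinarith
      nlinarith
  -- lower bound
  have hlb : L - ε/2 ≤ uMax f x := by
    have h1 : cp - ε/2 ≤ uMax f x := by
      have havg : cp - ε/4 ≤ mAvg f x (x+1) :=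
        le_avg hmeas hM (by linarith) (fun t ht => (hN1' t (le_trans hxN.le ht.1)).1)
      have := le_uMax hmeas hM (show x < x+1 by linarith) le_rfl (by linarith)
      linarith
    have h2 : cm - ε/2 ≤ uMax f x := by
      by_cases hcm : cm ≤ ε/2
      · have := uMax_nonneg hmeas hM x
        linarith
      · push_neg at hcm
        set R : ℝ := 4*cm*(x+N)/ε + 1 with hRdef
        have hxN0 : 0 < x + N := by linarith
        have hR0 : 0 < R := by
          have h0 : (0:ℝ) ≤ 4*cm*(x+N)/ε := div_nonneg (by nlinarith) hε.le
          rw [hRdef]; linarith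
        set a : ℝ := -N - R with hadef
        have hab : a < x := by rw [hadef]; linarith
        have haN : a < -N := by rw [hadef]; linarith
        have havg : cm - ε/2 ≤ mAvg f a x := by
          have hsp : (∫ t in a..(-N), |f t|) + (∫ t in (-N)..x, |f t|) = ∫ t in a..x, |f t| :=
            intervalIntegral.integral_add_adjacent_intervals
              (absIntegrable hmeas hM _ _) (absIntegrable hmeas hM _ _)
          have hlow : (cm - ε/4) * ((-N) - a) ≤ ∫ t in a..(-N), |f t| := by
            have := le_avg hmeas hM haN (fun t ht => (hN2' t ht.2).1)
            rw [mAvg, le_div_iff₀ (by linarith)] at this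
            linarith
          have hnn : (0:ℝ) ≤ ∫ t in (-N)..x, |f t| :=
            intervalIntegral.integral_nonneg (by linarith) (fun t _ => abs_nonneg _)
          rw [mAvg, le_div_iff₀ (by linarith)]
          have hmul : ε * (4*cm*(x+N)/ε) = 4*cm*(x+N) := mul_div_cancel₀ _ (ne_of_gt hε)
          have hRe : ε * R = 4*cm*(x+N) + ε := by rw [hRdef, mul_add, hmul, mul_one]
          have hkey : (cm - ε/2) * (x - a) ≤ (cm - ε/4) * ((-N) - a) := by
            have hx1 : x - a = (x + N) + R := by rw [hadef]; ring
            have hx2 : (-N) - a = R := by rw [hadef]; ring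
            rw [hx1, hx2]
            nlinarith [hRe, hxN0, hε, mul_pos hε hxN0]
          linarith
        have := le_uMax hmeas hM hab hab.le le_rfl
        linarith
    have hmax : max (cp - ε/2) (cm - ε/2) ≤ uMax f x := max_le h1 h2
    rw [max_sub_sub_right] at hmax
    exact hmax
  rw [Real.dist_eq, abs_sub_lt_iff]
  constructor <;> linarith

lemma mAvg_neg (f : ℝ → ℝ) (a b : ℝ) : mAvg (fun t => f (-t)) a b = mAvg f (-b) (-a) := by
  unfold mAvg
  rw [intervalIntegral.integral_comp_neg (fun t => |f t|)]
  ring_nf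

lemma uMax_neg (f : ℝ → ℝ) (x : ℝ) : uMax f x = uMax (fun t => f (-t)) (-x) := by
  unfold uMax
  congr 1
  ext y
  constructor
  · rintro ⟨a, b, hab, hax, hxb, rfl⟩
    exact ⟨-b, -a, by linarith, by linarith, by linarith, by rw [mAvg_neg]; norm_num⟩
  · rintro ⟨a, b, hab, hax, hxb, rfl⟩
    exact ⟨-b, -a, by linarith, by linarith, by linarith, mAvg_neg f a b⟩


theorem stmt0 (f : ℝ → ℝ) (hf : BVfun f) (cp cm : ℝ)
    (hp : Tendsto (fun x => |f x|) atTop (𝓝 cp))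
    (hm : Tendsto (fun x => |f x|) atBot (𝓝 cm)) :
    Tendsto (uMax f) atTop (𝓝 (max cp cm)) ∧
    Tendsto (uMax f) atBot (𝓝 (max cp cm)) := by
  obtain ⟨p, q, hp', hq', hpq⟩ :=
    hf.locallyBoundedVariationOn.exists_monotoneOn_sub_monotoneOn
  have hmeas : Measurable f := by
    rw [hpq]
    exact (monotoneOn_univ.1 hp').measurable.sub (monotoneOn_univ.1 hq').measurable
  have hM : ∀ x, |f x| ≤ |f 0| + (eVariationOn f univ).toReal := by
    intro x
    have h1 : dist (f x) (f 0) ≤ (eVariationOn f univ).toReal := by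
      rw [dist_edist]
      exact ENNReal.toReal_mono hf (eVariationOn.edist_le f (mem_univ x) (mem_univ 0))
    rw [Real.dist_eq] at h1
    have h2 : |f x| - |f 0| ≤ |f x - f 0| := abs_sub_abs_le_abs_sub _ _
    linarith
  refine ⟨key f hmeas _ hM cp cm hp hm, ?_⟩
  have hmeasg : Measurable (fun t => f (-t)) := hmeas.comp measurable_neg
  have hMg : ∀ x, |f (-x)| ≤ |f 0| + (eVariationOn f univ).toReal := fun x => hM (-x)
  have hpg : Tendsto (fun x => |f (-x)|) atTop (𝓝 cm) := hm.comp tendsto_neg_atTop_atBot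
  have hmg : Tendsto (fun x => |f (-x)|) atBot (𝓝 cp) := hp.comp tendsto_neg_atBot_atTop
  have part2 := key (fun t => f (-t)) hmeasg _ hMg cm cp hpg hmg
  have h3 : Tendsto (fun x => uMax (fun t => f (-t)) (-x)) atBot (𝓝 (max cm cp)) :=
    part2.comp tendsto_neg_atBot_atTop
  rw [max_comm] at h3
  exact h3.congr (fun x => (uMax_neg f x).symm)
end

section
/- Let f ∈ BV(ℝ) and let (f_j) ⊂ BV(ℝ) with ‖f_j − f‖_{BV} → 0. Then for any −∞ ≤ a < b ≤ ∞, Var_{(a,b)}(|f_j|) → Var_{(a,b)}(|f|). In other words, the map f ↦ Var_{(a,b)}(|f|) is continuous from BV(ℝ) to [0,∞). -/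
open MeasureTheory Filter Set Topology

noncomputable def Sth (ε t : ℝ) : ℝ := max (t - ε) (min (t + ε) 0)

lemma Sth_lip (ε x y : ℝ) : |Sth ε x - Sth ε y| ≤ |x - y| := by
  unfold Sth
  refine le_trans (abs_max_sub_max_le_max _ _ _ _) (max_le (by simp) ?_)
  refine le_trans (abs_min_sub_min_le_max _ _ _ _) (max_le (by simp) (by simp [abs_nonneg]))

-- core: x ≥ 0, y ≤ 0
lemma key_core (ε x y u v : ℝ) (hx : 0 ≤ x) (hy : y ≤ 0)
    (hu : |u - x| ≤ ε) (hv : |v - y| ≤ ε) :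
    |(|u| - |v|)| + |Sth ε x - Sth ε y| ≤ |(|x| - |y|)| + |u - x - (v - y)| + |x - y| := by
  have hε : 0 ≤ ε := le_trans (abs_nonneg _) hu
  have base : |(|u| - |v|)| ≤ |u - v| := abs_abs_sub_abs_le_abs_sub u v
  have base2 : |u - v| ≤ |x - y| + |u - x - (v - y)| := by
    have e : u - v = (x - y) + (u - x - (v - y)) := by ring
    rw [e]; exact abs_add_le _ _
  have hSx : Sth ε x = max (x - ε) 0 := by
    unfold Sth; rw [min_eq_right (by linarith : (0:ℝ) ≤ x + ε)]
  have hSy : Sth ε y = min (y + ε) 0 := by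
    unfold Sth; exact max_eq_right (le_min (by linarith) (by linarith))
  have hSS : |Sth ε x - Sth ε y| = max (x - ε) 0 - min (y + ε) 0 := by
    rw [hSx, hSy, abs_of_nonneg]
    have h1 : (0:ℝ) ≤ max (x - ε) 0 := le_max_right _ _
    have h2 : min (y + ε) 0 ≤ 0 := min_le_right _ _
    linarith
  have habsxy : |(|x| - |y|)| = |x + y| := by
    rw [abs_of_nonneg hx, abs_of_nonpos hy]; ring_nf
  have hxy : |x - y| = x - y := abs_of_nonneg (by linarith)
  have h1 : -(x + y) ≤ |x + y| := neg_le_abs _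
  have h2 : x + y ≤ |x + y| := le_abs_self _
  rcases le_total x ε with hxε | hxε <;> rcases le_total (y + ε) 0 with hyε | hyε
  · -- x ≤ ε, y ≤ -ε : |S-S| = -(y+ε)
    rw [hSS, max_eq_right (by linarith), min_eq_left hyε, habsxy, hxy]
    linarith
  · -- x ≤ ε, -ε ≤ y : S-S = 0
    rw [hSS, max_eq_right (by linarith), min_eq_right hyε, habsxy, hxy]
    have := abs_nonneg (x + y)
    linarith
  · -- x ≥ ε, y ≤ -ε : |S-S| = x - y - 2ε ; use triangle through |x|,|y|
    rw [hSS, max_eq_left (by linarith), min_eq_left hyε, hxy]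
    have t1 : |(|u| - |x|)| ≤ |u - x| := abs_abs_sub_abs_le_abs_sub u x
    have t2 : |(|v| - |y|)| ≤ |v - y| := abs_abs_sub_abs_le_abs_sub v y
    have t3 : |(|u| - |v|)| ≤ |(|x| - |y|)| + |(|u| - |x|)| + |(|v| - |y|)| := by
      have e : |u| - |v| = (|x| - |y|) + ((|u| - |x|) - (|v| - |y|)) := by ring
      calc |(|u| - |v|)| = |(|x| - |y|) + ((|u| - |x|) - (|v| - |y|))| := by rw [← e]
        _ ≤ |(|x| - |y|)| + |(|u| - |x|) - (|v| - |y|)| := abs_add_le _ _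
        _ ≤ |(|x| - |y|)| + (|(|u| - |x|)| + |(|v| - |y|)|) := by
            have := abs_sub (|u| - |x|) (|v| - |y|)
            linarith
        _ = _ := by ring
    have := abs_nonneg (u - x - (v - y))
    linarith
  · -- x ≥ ε, -ε ≤ y : |S-S| = x - ε
    rw [hSS, max_eq_left (by linarith), min_eq_right hyε, habsxy, hxy]
    linarith

lemma key_ineq (ε x y u v : ℝ) (hu : |u - x| ≤ ε) (hv : |v - y| ≤ ε) :
    |(|u| - |v|)| + |Sth ε x - Sth ε y| ≤ |(|x| - |y|)| + |u - x - (v - y)| + |x - y| := by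
  have base : |(|u| - |v|)| ≤ |u - v| := abs_abs_sub_abs_le_abs_sub u v
  have base2 : |u - v| ≤ |x - y| + |u - x - (v - y)| := by
    have e : u - v = (x - y) + (u - x - (v - y)) := by ring
    rw [e]; exact abs_add_le _ _
  have slip := Sth_lip ε x y
  rcases le_total 0 x with hx | hx <;> rcases le_total 0 y with hy | hy
  · have habs : |(|x| - |y|)| = |x - y| := by rw [abs_of_nonneg hx, abs_of_nonneg hy]
    linarith
  · exact key_core ε x y u v hx hy hu hv
  · have := key_core ε y x v u hy hx hv hu
    have e1 : |(|v| - |u|)| = |(|u| - |v|)| := abs_sub_comm _ _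
    have e2 : |Sth ε y - Sth ε x| = |Sth ε x - Sth ε y| := abs_sub_comm _ _
    have e3 : |(|y| - |x|)| = |(|x| - |y|)| := abs_sub_comm _ _
    have e4 : |v - y - (u - x)| = |u - x - (v - y)| := abs_sub_comm _ _
    have e5 : |y - x| = |x - y| := abs_sub_comm _ _
    linarith
  · have habs : |(|x| - |y|)| = |x - y| := by
      rw [abs_of_nonpos hx, abs_of_nonpos hy, ← abs_neg]; ring_nf
    linarith
lemma Sth_sub_le (ε t : ℝ) (hε : 0 ≤ ε) : |t - Sth ε t| ≤ ε := by
  unfold Sth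
  rcases le_total (t - ε) (min (t + ε) 0) with h | h
  · rw [max_eq_right h]
    rcases le_total (t + ε) 0 with h2 | h2
    · rw [min_eq_left h2, abs_le]; constructor <;> linarith
    · rw [min_eq_right h2, abs_le]
      rw [min_eq_right h2] at h
      constructor <;> linarith
  · rw [max_eq_left h, abs_le]; constructor <;> linarith

noncomputable def pSum (h : ℝ → ℝ) (n : ℕ) (u : ℕ → ℝ) : ENNReal :=
  ∑ i ∈ Finset.range n, edist (h (u (i + 1))) (h (u i))

lemma edist_le_chain (h : ℝ → ℝ) (w : ℕ → ℝ) {a b : ℕ} (hab : a ≤ b) :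
    edist (h (w b)) (h (w a)) ≤ ∑ i ∈ Finset.Ico a b, edist (h (w (i + 1))) (h (w i)) := by
  induction b, hab using Nat.le_induction with
  | base => simp
  | succ b hab ih =>
      rw [Finset.sum_Ico_succ_top hab]
      calc edist (h (w (b + 1))) (h (w a))
          ≤ edist (h (w (b+1))) (h (w b)) + edist (h (w b)) (h (w a)) := edist_triangle _ _ _
        _ ≤ edist (h (w (b+1))) (h (w b)) + ∑ i ∈ Finset.Ico a b, edist (h (w (i+1))) (h (w i)) :=
            add_le_add_right ih _
        _ = _ := by rw [add_comm]

lemma sum_lift (h : ℝ → ℝ) (w : ℕ → ℝ) (u : ℕ → ℝ) (φ : ℕ → ℕ) (hφ : Monotone φ)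
    (hc : ∀ i, u i = w (φ i)) (n : ℕ) :
    pSum h n u ≤ ∑ i ∈ Finset.Ico (φ 0) (φ n), edist (h (w (i + 1))) (h (w i)) := by
  induction n with
  | zero => simp [pSum]
  | succ n ih =>
      have h1 : φ 0 ≤ φ n := hφ (Nat.zero_le n)
      have h2 : φ n ≤ φ (n + 1) := hφ (Nat.le_succ n)
      rw [← Finset.sum_Ico_consecutive _ h1 h2]
      unfold pSum
      rw [Finset.sum_range_succ]
      refine add_le_add ih ?_
      rw [hc n, hc (n+1)]
      exact edist_le_chain h w h2

lemma psum_le_psum_range (h : ℝ → ℝ) (w : ℕ → ℝ) {N : ℕ} {s : Finset ℕ}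
    (hs : s ⊆ Finset.range N) :
    ∑ i ∈ s, edist (h (w (i + 1))) (h (w i)) ≤ pSum h N w :=
  Finset.sum_le_sum_of_subset hs

/-- merge of two partitions of `s`: common refinement dominating both, for every function. -/
lemma exists_merge (s : Set ℝ) {n m : ℕ} {u v : ℕ → ℝ} (hu : Monotone u) (hus : ∀ i, u i ∈ s)
    (hv : Monotone v) (hvs : ∀ i, v i ∈ s) :
    ∃ (N : ℕ) (w : ℕ → ℝ), Monotone w ∧ (∀ i, w i ∈ s) ∧
      (∀ h : ℝ → ℝ, pSum h n u ≤ pSum h N w) ∧ (∀ h : ℝ → ℝ, pSum h m v ≤ pSum h N w) := by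
  classical
  set A : Finset ℝ :=
    ((Finset.range (n + 1)).image u) ∪ ((Finset.range (m + 1)).image v) with hA
  have hu0 : u 0 ∈ A := by
    simp [hA]; exact Or.inl ⟨0, Nat.zero_le n, rfl⟩
  have hAne : A.Nonempty := ⟨u 0, hu0⟩
  have hAs : ∀ x ∈ A, x ∈ s := by
    intro x hx
    simp only [hA, Finset.mem_union, Finset.mem_image, Finset.mem_range] at hx
    rcases hx with ⟨i, _, rfl⟩ | ⟨i, _, rfl⟩
    exacts [hus i, hvs i]
  set k := A.card with hk
  have hkpos : 0 < k := Finset.card_pos.mpr hAne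
  set e := A.orderIsoOfFin rfl with he
  set w : ℕ → ℝ := fun i => (e ⟨min i (k - 1), by omega⟩ : ℝ) with hw
  have hwmono : Monotone w := by
    intro i j hij
    have : (⟨min i (k-1), by omega⟩ : Fin k) ≤ ⟨min j (k-1), by omega⟩ := by
      simp [Fin.le_def]; omega
    exact_mod_cast (e.le_iff_le.mpr this)
  have hws : ∀ i, w i ∈ s := fun i => hAs _ (e ⟨min i (k-1), by omega⟩).2
  -- index function
  have hidx : ∀ x (hx : x ∈ A), ∃ i : ℕ, i ≤ k - 1 ∧ w i = x := by
    intro x hx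
    refine ⟨(e.symm ⟨x, hx⟩ : Fin k), by omega, ?_⟩
    have : min ((e.symm ⟨x, hx⟩ : Fin k) : ℕ) (k - 1) = (e.symm ⟨x, hx⟩ : Fin k) := by
      have := (e.symm ⟨x, hx⟩).2; omega
    simp only [hw, this]
    simp
  -- lift a partition whose points are in A
  have lift : ∀ (p : ℕ) (z : ℕ → ℝ), Monotone z → (∀ i, z i ∈ A) →
      ∀ h : ℝ → ℝ, pSum h p z ≤ pSum h (k - 1) w := by
    intro p z hz hzA h
    set φ : ℕ → ℕ := fun i => ((e.symm ⟨z i, hzA i⟩ : Fin k) : ℕ) with hφdef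
    have hφmono : Monotone φ := by
      intro i j hij
      have h1 : (⟨z i, hzA i⟩ : A) ≤ ⟨z j, hzA j⟩ := by
        simp only [← Subtype.coe_le_coe]; exact hz hij
      exact e.symm.le_iff_le.mpr h1
    have hφc : ∀ i, z i = w (φ i) := by
      intro i
      have hlt := (e.symm ⟨z i, hzA i⟩).2
      have : min (φ i) (k - 1) = φ i := by simp only [hφdef]; omega
      simp only [hw, this, hφdef]
      simp only [hφdef] at this
      simp [this]
    calc pSum h p z ≤ ∑ i ∈ Finset.Ico (φ 0) (φ p), edist (h (w (i+1))) (h (w i)) :=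
          sum_lift h w z φ hφmono hφc p
      _ ≤ pSum h (k - 1) w := by
          apply psum_le_psum_range
          intro i hi
          simp only [Finset.mem_Ico] at hi
          have := (e.symm ⟨z p, hzA p⟩).2
      
          simp only [Finset.mem_range]
          have : φ p < k := (e.symm ⟨z p, hzA p⟩).2
          omega
  refine ⟨k - 1, w, hwmono, hws, ?_, ?_⟩
  · intro h
    have hzA : ∀ i, u (min i n) ∈ A := by
      intro i; simp only [hA, Finset.mem_union, Finset.mem_image]
      exact Or.inl ⟨min i n, by simp only [Finset.mem_range]; omega, rfl⟩
    have : pSum h n u = pSum h n (fun i => u (min i n)) := by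
      unfold pSum
      apply Finset.sum_congr rfl
      intro i hi
      simp only [Finset.mem_range] at hi
      have e1 : (i+1) ⊓ n = i + 1 := by omega
      have e2 : i ⊓ n = i := by omega
      simp only [e1, e2]
    rw [this]
    exact lift n _ (fun i j hij => hu (by omega)) hzA h
  · intro h
    have hzA : ∀ i, v (min i m) ∈ A := by
      intro i; simp only [hA, Finset.mem_union, Finset.mem_image]
      exact Or.inr ⟨min i m, by simp only [Finset.mem_range]; omega, rfl⟩
    have : pSum h m v = pSum h m (fun i => v (min i m)) := by
      unfold pSum
      apply Finset.sum_congr rfl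
      intro i hi
      simp only [Finset.mem_range] at hi
      have e1 : (i+1) ⊓ m = i + 1 := by omega
      have e2 : i ⊓ m = i := by omega
      simp only [e1, e2]
    rw [this]
    exact lift m _ (fun i j hij => hv (by omega)) hzA h



lemma pSum_ne_top (h : ℝ → ℝ) (n : ℕ) (u : ℕ → ℝ) : pSum h n u ≠ ⊤ := by
  unfold pSum
  exact (ENNReal.sum_lt_top.mpr (fun i _ => edist_lt_top _ _)).ne

lemma pSum_toReal (h : ℝ → ℝ) (n : ℕ) (u : ℕ → ℝ) :
    (pSum h n u).toReal = ∑ i ∈ Finset.range n, |h (u (i + 1)) - h (u i)| := by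
  unfold pSum
  rw [ENNReal.toReal_sum (fun i _ => (edist_lt_top _ _).ne)]
  exact Finset.sum_congr rfl fun i _ => by
    rw [edist_dist, ENNReal.toReal_ofReal dist_nonneg, Real.dist_eq]

lemma pSum_le_eVar (h : ℝ → ℝ) {s : Set ℝ} {u : ℕ → ℝ} (hu : Monotone u)
    (hus : ∀ i, u i ∈ s) (n : ℕ) : pSum h n u ≤ eVariationOn h s :=
  eVariationOn.sum_le (f := h) (n := n) hu hus

lemma evar_sub_le (F G : ℝ → ℝ) (s : Set ℝ) :
    eVariationOn (fun z => F z - G z) s ≤ eVariationOn F s + eVariationOn G s := by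
  apply iSup_le _
  rintro ⟨n, u, hu, hus⟩
  calc ∑ i ∈ Finset.range n, edist ((fun z => F z - G z) (u (i+1))) ((fun z => F z - G z) (u i))
      ≤ ∑ i ∈ Finset.range n,
        (edist (F (u (i+1))) (F (u i)) + edist (G (u (i+1))) (G (u i))) := by
        apply Finset.sum_le_sum
        intro i _
        simp only [edist_dist]
        rw [← ENNReal.ofReal_add dist_nonneg dist_nonneg]
        exact ENNReal.ofReal_le_ofReal (dist_sub_sub_le _ _ _ _)
    _ = pSum F n u + pSum G n u := Finset.sum_add_distrib
    _ ≤ eVariationOn F s + eVariationOn G s :=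
        add_le_add (pSum_le_eVar F hu hus n) (pSum_le_eVar G hu hus n)

lemma evar_abs_le (F : ℝ → ℝ) (s : Set ℝ) :
    eVariationOn (fun z => |F z|) s ≤ eVariationOn F s := by
  apply iSup_le _
  rintro ⟨n, u, hu, hus⟩
  calc ∑ i ∈ Finset.range n, edist ((fun z => |F z|) (u (i+1))) ((fun z => |F z|) (u i))
      ≤ ∑ i ∈ Finset.range n, edist (F (u (i+1))) (F (u i)) := by
        apply Finset.sum_le_sum
        intro i _
        simp only [edist_dist, Real.dist_eq]
        exact ENNReal.ofReal_le_ofReal (abs_abs_sub_abs_le_abs_sub _ _)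
    _ ≤ eVariationOn F s := pSum_le_eVar F hu hus n

lemma key_edist (ε : ℝ) (f g : ℝ → ℝ) (hgf : ∀ z, |g z - f z| ≤ ε) (x y : ℝ) :
    edist (|g x|) (|g y|) + edist (Sth ε (f x)) (Sth ε (f y)) ≤
      edist (|f x|) (|f y|) + (edist (g x - f x) (g y - f y) + edist (f x) (f y)) := by
  simp only [edist_dist, Real.dist_eq]
  rw [← ENNReal.ofReal_add (abs_nonneg _) (abs_nonneg _),
    ← ENNReal.ofReal_add (abs_nonneg _) (abs_nonneg _),
    ← ENNReal.ofReal_add (abs_nonneg _) (by positivity)]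
  apply ENNReal.ofReal_le_ofReal
  have h := key_ineq ε (f x) (f y) (g x) (g y) (by simpa using hgf x) (by simpa using hgf y)
  linarith

lemma upper_est (s : Set ℝ) (f g : ℝ → ℝ) (ε : ℝ) (hgf : ∀ z, |g z - f z| ≤ ε)
    (n₀ : ℕ) {u₀ : ℕ → ℝ} (hu₀ : Monotone u₀) (hu₀s : ∀ i, u₀ i ∈ s) :
    eVariationOn (fun z => |g z|) s + pSum (fun z => Sth ε (f z)) n₀ u₀ ≤
      eVariationOn (fun z => |f z|) s +
        (eVariationOn (fun z => g z - f z) s + eVariationOn f s) := by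
  haveI : Nonempty { u : ℕ → ℝ // Monotone u ∧ ∀ i : ℕ, u i ∈ s } :=
    eVariationOn.nonempty_monotone_mem ⟨u₀ 0, hu₀s 0⟩
  show (⨆ p : ℕ × { u : ℕ → ℝ // Monotone u ∧ ∀ i, u i ∈ s },
      ∑ i ∈ Finset.range p.1, edist ((fun z => |g z|) (p.2.1 (i + 1)))
        ((fun z => |g z|) (p.2.1 i))) + _ ≤ _
  rw [ENNReal.iSup_add]
  apply iSup_le _
  rintro ⟨n, u, hu, hus⟩
  obtain ⟨N, w, hw, hws, d1, d2⟩ := exists_merge s hu hus hu₀ hu₀s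
  have step1 : (∑ i ∈ Finset.range n, edist ((fun z => |g z|) (u (i + 1)))
        ((fun z => |g z|) (u i))) + pSum (fun z => Sth ε (f z)) n₀ u₀ ≤
      pSum (fun z => |g z|) N w + pSum (fun z => Sth ε (f z)) N w :=
    add_le_add (d1 _) (d2 _)
  refine step1.trans ?_
  have step2 : pSum (fun z => |g z|) N w + pSum (fun z => Sth ε (f z)) N w ≤
      pSum (fun z => |f z|) N w + (pSum (fun z => g z - f z) N w + pSum f N w) := by
    unfold pSum
    rw [← Finset.sum_add_distrib, ← Finset.sum_add_distrib, ← Finset.sum_add_distrib]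
    apply Finset.sum_le_sum
    intro i _
    exact key_edist ε f g hgf (w (i+1)) (w i)
  refine step2.trans ?_
  exact add_le_add (pSum_le_eVar _ hw hws N)
    (add_le_add (pSum_le_eVar _ hw hws N) (pSum_le_eVar _ hw hws N))

lemma exists_partition (F : ℝ → ℝ) (s : Set ℝ) {x₀ : ℝ} (hx₀ : x₀ ∈ s)
    (hbv : BoundedVariationOn F s) {η : ℝ} (hη : 0 < η) :
    ∃ (n : ℕ) (u : ℕ → ℝ), Monotone u ∧ (∀ i, u i ∈ s) ∧
      (eVariationOn F s).toReal - η ≤ ∑ i ∈ Finset.range n, |F (u (i + 1)) - F (u i)| := by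
  rcases le_or_gt ((eVariationOn F s).toReal) η with hle | hlt
  · exact ⟨0, fun _ => x₀, monotone_const, fun _ => hx₀, by simp; linarith⟩
  · have h0 : 0 ≤ (eVariationOn F s).toReal - η := by linarith
    have h2 : ENNReal.ofReal ((eVariationOn F s).toReal - η) < eVariationOn F s := by
      conv_rhs => rw [← ENNReal.ofReal_toReal hbv]
      rw [ENNReal.ofReal_lt_ofReal_iff (by linarith)]
      linarith
    obtain ⟨⟨n, u, hu, hus⟩, hlt2⟩ :
        ∃ p : ℕ × { u : ℕ → ℝ // Monotone u ∧ ∀ i, u i ∈ s },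
          ENNReal.ofReal ((eVariationOn F s).toReal - η) <
            ∑ i ∈ Finset.range p.1, edist (F ((p.2 : ℕ → ℝ) (i + 1))) (F ((p.2 : ℕ → ℝ) i)) :=
      lt_iSup_iff.mp h2
    refine ⟨n, u, hu, hus, ?_⟩
    have h3 : ENNReal.ofReal ((eVariationOn F s).toReal - η) < pSum F n u := hlt2
    have h4 := ENNReal.toReal_mono (pSum_ne_top F n u) h3.le
    rw [ENNReal.toReal_ofReal h0, pSum_toReal] at h4
    exact h4

lemma bv_tendsto_atBot (h : ℝ → ℝ) (hbv : BoundedVariationOn h univ) :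
    ∃ L : ℝ, Tendsto h atBot (𝓝 L) := by
  have hloc : LocallyBoundedVariationOn h univ := hbv.locallyBoundedVariationOn
  set V : ℝ := (eVariationOn h univ).toReal with hV
  set p : ℝ → ℝ := variationOnFromTo h univ 0 with hp
  have hpmono : Monotone p := by
    rw [← monotoneOn_univ]
    exact variationOnFromTo.monotoneOn hloc (mem_univ 0)
  have hplb : ∀ x, -V ≤ p x := by
    intro x
    rcases le_total 0 x with hx | hx
    · have := variationOnFromTo.nonneg_of_le h univ hx
      have hVnn : 0 ≤ V := ENNReal.toReal_nonneg
      simp only [hp]; linarith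
    · rw [hp, variationOnFromTo.eq_of_ge h univ hx]
      have : (eVariationOn h (univ ∩ Icc x 0)).toReal ≤ V := by
        apply ENNReal.toReal_mono hbv
        exact eVariationOn.mono h inter_subset_left
      linarith
  have hpbdd : BddBelow (range p) := ⟨-V, by rintro z ⟨x, rfl⟩; exact hplb x⟩
  set q : ℝ → ℝ := fun x => p x - h x with hq
  have hqmono : Monotone q := by
    rw [← monotoneOn_univ]
    have := variationOnFromTo.sub_self_monotoneOn hloc (mem_univ (0:ℝ))
    exact this
  have hqbdd : BddBelow (range q) := by
    refine ⟨-V - (h 0 + V), ?_⟩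
    rintro z ⟨x, rfl⟩
    have h1 : dist (h x) (h 0) ≤ V := hbv.dist_le (mem_univ x) (mem_univ 0)
    have h2 : h x - h 0 ≤ |h x - h 0| := le_abs_self _
    rw [Real.dist_eq] at h1
    have h3 : -V ≤ p x := hplb x
    simp only [hq]
    linarith
  have hptend := tendsto_atBot_ciInf hpmono hpbdd
  have hqtend := tendsto_atBot_ciInf hqmono hqbdd
  refine ⟨(⨅ x, p x) - (⨅ x, q x), ?_⟩
  have : h = fun x => p x - q x := by
    funext x; simp only [hq]; ring
  rw [this]
  exact hptend.sub hqtend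

lemma bv_bound (h : ℝ → ℝ) (hbv : BoundedVariationOn h univ) (x : ℝ) :
    |h x| ≤ |limUnder atBot h| + (eVariationOn h univ).toReal := by
  obtain ⟨L, hL⟩ := bv_tendsto_atBot h hbv
  have hlu : limUnder atBot h = L := hL.limUnder_eq
  have h1 : ∀ y : ℝ, dist (h x) (h y) ≤ (eVariationOn h univ).toReal := fun y =>
    hbv.dist_le (mem_univ x) (mem_univ y)
  have h2 : Tendsto (fun y => dist (h x) (h y)) atBot (𝓝 (dist (h x) L)) :=
    tendsto_const_nhds.dist hL
  have h3 : dist (h x) L ≤ (eVariationOn h univ).toReal :=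
    le_of_tendsto h2 (Eventually.of_forall h1)
  rw [hlu]
  have h4 : |h x| ≤ |L| + |h x - L| := by
    have : h x = L + (h x - L) := by ring
    calc |h x| = |L + (h x - L)| := by rw [← this]
      _ ≤ |L| + |h x - L| := abs_add_le _ _
  rw [Real.dist_eq] at h3
  linarith


theorem stmt4 (f : ℝ → ℝ) (hf : BVfun f) (fj : ℕ → ℝ → ℝ) (hfj : ∀ j, BVfun (fj j))
    (hconv : Tendsto (fun j => bvNorm (fj j - f)) atTop (𝓝 0))
    (a b : EReal) (hab : a < b) :
    Tendsto (fun j => varOn (fun x => |fj j x|) (erealIoo a b)) atTop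
      (𝓝 (varOn (fun x => |f x|) (erealIoo a b))) := by
  set s : Set ℝ := erealIoo a b with hsdef
  obtain ⟨x₀, hx₀a, hx₀b⟩ := EReal.exists_between_coe_real hab
  have hx₀ : x₀ ∈ s := ⟨hx₀a, hx₀b⟩
  have hfU : BoundedVariationOn f univ := hf
  have hfs : BoundedVariationOn f s := hfU.mono (subset_univ s)
  have hfabs : BoundedVariationOn (fun x => |f x|) s :=
    ne_top_of_le_ne_top hfs (evar_abs_le f s)
  have hbve : ∀ j, BoundedVariationOn (fj j - f) univ := fun j =>
    ne_top_of_le_ne_top (ENNReal.add_ne_top.mpr ⟨hfj j, hfU⟩) (evar_sub_le (fj j) f univ)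
  have hbnd : ∀ j z, |fj j z - f z| ≤ bvNorm (fj j - f) := by
    intro j z
    have h1 := bv_bound (fj j - f) (hbve j) z
    simpa [bvNorm, varOn, Pi.sub_apply] using h1
  have hvtend : Tendsto (fun j => varOn (fj j - f) univ) atTop (𝓝 0) := by
    exact tendsto_of_tendsto_of_tendsto_of_le_of_le tendsto_const_nhds hconv
      (fun j => ENNReal.toReal_nonneg) (fun j => le_add_of_nonneg_left (abs_nonneg _))
  rw [Metric.tendsto_nhds]
  intro η hη
  have hη4 : 0 < η / 4 := by linarith
  obtain ⟨n₁, u₁, hu₁, hu₁s, hp₁⟩ := exists_partition (fun x => |f x|) s hx₀ hfabs hη4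
  obtain ⟨n₀, u₀, hu₀, hu₀s, hp₀⟩ := exists_partition f s hx₀ hfs hη4
  set δ : ℝ := η / (8 * ((n₀ : ℝ) + (n₁ : ℝ) + 1)) with hδdef
  have hδpos : 0 < δ := by positivity
  have hδval : δ * (8 * ((n₀ : ℝ) + (n₁ : ℝ) + 1)) = η := by
    rw [hδdef]; field_simp
  have hδn₀ : 2 * (n₀ : ℝ) * δ ≤ η / 4 := by nlinarith [mul_nonneg hδpos.le (Nat.cast_nonneg n₁ : (0:ℝ) ≤ n₁)]
  have hδn₁ : 2 * (n₁ : ℝ) * δ ≤ η / 4 := by nlinarith [mul_nonneg hδpos.le (Nat.cast_nonneg n₀ : (0:ℝ) ≤ n₀)]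
  have hev1 : ∀ᶠ j in atTop, bvNorm (fj j - f) < δ :=
    hconv.eventually (eventually_lt_nhds hδpos)
  have hev2 : ∀ᶠ j in atTop, varOn (fj j - f) univ < η / 4 :=
    hvtend.eventually (eventually_lt_nhds hη4)
  filter_upwards [hev1, hev2] with j hj1 hj2
  set g : ℝ → ℝ := fj j with hgdef
  set ε : ℝ := bvNorm (fj j - f) with hεdef
  have hε0 : 0 ≤ ε := le_trans (abs_nonneg _) (hbnd j x₀)
  have hgf : ∀ z, |g z - f z| ≤ ε := fun z => hbnd j z
  have hgabs : BoundedVariationOn (fun x => |g x|) s :=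
    ne_top_of_le_ne_top ((hfj j).mono (subset_univ s)) (evar_abs_le g s)
  have hesub : eVariationOn (fun z => g z - f z) s ≠ ⊤ :=
    ne_top_of_le_ne_top (hbve j) (eVariationOn.mono (fj j - f) (subset_univ s))
  -- upper estimate in ENNReal
  have E1 := upper_est s f g ε hgf n₀ hu₀ hu₀s
  have hRne : eVariationOn (fun z => |f z|) s +
      (eVariationOn (fun z => g z - f z) s + eVariationOn f s) ≠ ⊤ :=
    ENNReal.add_ne_top.mpr ⟨hfabs, ENNReal.add_ne_top.mpr ⟨hesub, hfs⟩⟩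
  have E2 := ENNReal.toReal_mono hRne E1
  rw [ENNReal.toReal_add hgabs (pSum_ne_top _ _ _),
    ENNReal.toReal_add hfabs (ENNReal.add_ne_top.mpr ⟨hesub, hfs⟩),
    ENNReal.toReal_add hesub hfs, pSum_toReal] at E2
  -- lower bound on the Sth partition sum
  have hSlb : (eVariationOn f s).toReal - η / 4 - 2 * (n₀ : ℝ) * ε ≤
      ∑ i ∈ Finset.range n₀, |Sth ε (f (u₀ (i + 1))) - Sth ε (f (u₀ i))| := by
    have hterm : ∀ i ∈ Finset.range n₀,
        |f (u₀ (i + 1)) - f (u₀ i)| - 2 * ε ≤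
          |Sth ε (f (u₀ (i + 1))) - Sth ε (f (u₀ i))| := by
      intro i _
      have t1 := Sth_sub_le ε (f (u₀ (i + 1))) hε0
      have t2 := Sth_sub_le ε (f (u₀ i)) hε0
      have t3 : |f (u₀ (i+1)) - f (u₀ i)| ≤
          |Sth ε (f (u₀ (i+1))) - Sth ε (f (u₀ i))| +
            (|f (u₀ (i+1)) - Sth ε (f (u₀ (i+1)))| + |f (u₀ i) - Sth ε (f (u₀ i))|) := by
        have e : f (u₀ (i+1)) - f (u₀ i) =
            (Sth ε (f (u₀ (i+1))) - Sth ε (f (u₀ i))) +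
              ((f (u₀ (i+1)) - Sth ε (f (u₀ (i+1)))) - (f (u₀ i) - Sth ε (f (u₀ i)))) := by ring
        calc |f (u₀ (i+1)) - f (u₀ i)| = _ := by rw [e]
          _ ≤ |Sth ε (f (u₀ (i+1))) - Sth ε (f (u₀ i))| +
              |(f (u₀ (i+1)) - Sth ε (f (u₀ (i+1)))) - (f (u₀ i) - Sth ε (f (u₀ i)))| :=
            abs_add_le _ _
          _ ≤ _ := by
            have := abs_sub (f (u₀ (i+1)) - Sth ε (f (u₀ (i+1)))) (f (u₀ i) - Sth ε (f (u₀ i)))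
            linarith
      linarith
    have hsum := Finset.sum_le_sum hterm
    rw [Finset.sum_sub_distrib, Finset.sum_const, Finset.card_range] at hsum
    have : (eVariationOn f s).toReal - η / 4 ≤ ∑ i ∈ Finset.range n₀, |f (u₀ (i+1)) - f (u₀ i)| :=
      hp₀
    have hms : (n₀ : ℝ) * (2 * ε) = 2 * (n₀ : ℝ) * ε := by ring
    rw [nsmul_eq_mul, hms] at hsum
    linarith
  -- upper bound conclusion
  have hUp : (eVariationOn (fun x => |g x|) s).toReal ≤
      (eVariationOn (fun x => |f x|) s).toReal + η / 4 + η / 4 + 2 * (n₀:ℝ) * ε := by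
    have hsub_le : (eVariationOn (fun z => g z - f z) s).toReal ≤
        (eVariationOn (g - f) univ).toReal := by
      apply ENNReal.toReal_mono (hbve j)
      exact eVariationOn.mono (fj j - f) (subset_univ s)
    have hj2' : (eVariationOn (g - f) univ).toReal < η / 4 := hj2
    linarith [E2, hSlb, hsub_le, hj2']
  -- lower bound conclusion
  have hLo : (eVariationOn (fun x => |f x|) s).toReal - η / 4 - 2 * (n₁:ℝ) * ε ≤
      (eVariationOn (fun x => |g x|) s).toReal := by
    have hterm : ∀ i ∈ Finset.range n₁,
        |(|f (u₁ (i+1))|) - (|f (u₁ i)|)| ≤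
          |(|g (u₁ (i+1))|) - (|g (u₁ i)|)| + 2 * ε := by
      intro i _
      have t1 : |(|f (u₁ (i+1))|) - (|g (u₁ (i+1))|)| ≤ |f (u₁ (i+1)) - g (u₁ (i+1))| :=
        abs_abs_sub_abs_le_abs_sub _ _
      have t2 : |(|f (u₁ i)|) - (|g (u₁ i)|)| ≤ |f (u₁ i) - g (u₁ i)| :=
        abs_abs_sub_abs_le_abs_sub _ _
      have t3 : |f (u₁ (i+1)) - g (u₁ (i+1))| ≤ ε := by
        rw [abs_sub_comm]; exact hgf _
      have t4 : |f (u₁ i) - g (u₁ i)| ≤ ε := by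
        rw [abs_sub_comm]; exact hgf _
      have e : (|f (u₁ (i+1))|) - (|f (u₁ i)|) =
          ((|g (u₁ (i+1))|) - (|g (u₁ i)|)) +
            (((|f (u₁ (i+1))|) - (|g (u₁ (i+1))|)) - ((|f (u₁ i)|) - (|g (u₁ i)|))) := by ring
      calc |(|f (u₁ (i+1))|) - (|f (u₁ i)|)| = _ := by rw [e]
        _ ≤ |(|g (u₁ (i+1))|) - (|g (u₁ i)|)| +
            |((|f (u₁ (i+1))|) - (|g (u₁ (i+1))|)) - ((|f (u₁ i)|) - (|g (u₁ i)|))| := abs_add_le _ _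
        _ ≤ _ := by
          have := abs_sub ((|f (u₁ (i+1))|) - (|g (u₁ (i+1))|)) ((|f (u₁ i)|) - (|g (u₁ i)|))
          linarith
    have hsum := Finset.sum_le_sum hterm
    rw [Finset.sum_add_distrib, Finset.sum_const, Finset.card_range, nsmul_eq_mul] at hsum
    have hgsum : ∑ i ∈ Finset.range n₁, |(|g (u₁ (i+1))|) - (|g (u₁ i)|)| ≤
        (eVariationOn (fun x => |g x|) s).toReal := by
      have h1 : pSum (fun z => |g z|) n₁ u₁ ≤ eVariationOn (fun z => |g z|) s :=
        pSum_le_eVar _ hu₁ hu₁s n₁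
      have h2 := ENNReal.toReal_mono hgabs h1
      rw [pSum_toReal] at h2
      exact h2
    have hms : (n₁ : ℝ) * (2 * ε) = 2 * (n₁ : ℝ) * ε := by ring
    rw [hms] at hsum
    linarith [hp₁, hsum, hgsum]
  have hεδ : ε < δ := hj1
  rw [Real.dist_eq, abs_lt]
  unfold varOn
  constructor
  · nlinarith [mul_nonneg (Nat.cast_nonneg n₁ : (0:ℝ) ≤ n₁) hε0, mul_nonneg (Nat.cast_nonneg n₀ : (0:ℝ) ≤ n₀) hε0,
      mul_le_mul_of_nonneg_left hεδ.le (by positivity : (0:ℝ) ≤ 2 * (n₁:ℝ))]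
  · nlinarith [mul_nonneg (Nat.cast_nonneg n₀ : (0:ℝ) ≤ n₀) hε0,
      mul_le_mul_of_nonneg_left hεδ.le (by positivity : (0:ℝ) ≤ 2 * (n₀:ℝ))]
end

section
/- Let f ∈ BV(ℝ) and let (f_j) ⊂ BV(ℝ) with ‖f_j − f‖_{BV} → 0. Suppose x ∈ ℝ, and for each j there is a bounded interval I_{x,j} ∋ x with (1/|I_{x,j}|)∫_{I_{x,j}} |f_j| = M̃f_j(x). If the indicator functions χ_{I_{x,j}} converge a.e. to χ_I for some interval I with 0 < |I| < ∞, then (1/|I|)∫_I |f| = M̃f(x). -/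
open MeasureTheory Filter Set Topology

lemma eVar_sub_le (f g : ℝ → ℝ) (s : Set ℝ) :
    eVariationOn (f - g) s ≤ eVariationOn f s + eVariationOn g s := by
  apply iSup_le
  rintro ⟨n, u, hu, us⟩
  calc ∑ i ∈ Finset.range n, edist ((f - g) (u (i+1))) ((f - g) (u i))
      ≤ ∑ i ∈ Finset.range n, (edist (f (u (i+1))) (f (u i)) + edist (g (u (i+1))) (g (u i))) := by
        apply Finset.sum_le_sum
        intro i _
        have := edist_add_add_le (f (u (i+1))) (-(g (u (i+1)))) (f (u i)) (-(g (u i)))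
        simpa [sub_eq_add_neg, edist_neg_neg] using this
    _ = (∑ i ∈ Finset.range n, edist (f (u (i+1))) (f (u i)))
        + ∑ i ∈ Finset.range n, edist (g (u (i+1))) (g (u i)) := Finset.sum_add_distrib
    _ ≤ _ := add_le_add (eVariationOn.sum_le (f := f) (n := n) hu us) (eVariationOn.sum_le (f := g) (n := n) hu us)

lemma BVfun.sub {f g : ℝ → ℝ} (hf : BVfun f) (hg : BVfun g) : BVfun (f - g) := by
  have h := eVar_sub_le f g univ
  intro htop
  rw [htop] at h
  exact (ENNReal.add_lt_top.2 ⟨hf.lt_top, hg.lt_top⟩).ne (top_le_iff.1 h)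

lemma BVfun.measurable {f : ℝ → ℝ} (hf : BVfun f) : Measurable f := by
  obtain ⟨p, q, hp, hq, rfl⟩ :=
    hf.locallyBoundedVariationOn.exists_monotoneOn_sub_monotoneOn
  rw [monotoneOn_univ] at hp hq
  exact hp.measurable.sub hq.measurable

lemma BVfun.exists_lim_atBot {g : ℝ → ℝ} (hg : BVfun g) :
    ∃ L, Tendsto g atBot (𝓝 L) := by
  set V : ℝ → ℝ := fun t => (eVariationOn g (Iic t)).toReal with hV
  have hfin : ∀ t, eVariationOn g (Iic t) ≠ ⊤ :=
    fun t => ne_top_of_le_ne_top hg (eVariationOn.mono g (subset_univ _))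
  have hbdd : BddBelow (range V) := ⟨0, by rintro y ⟨t, rfl⟩; exact ENNReal.toReal_nonneg⟩
  have hkey : ∀ s t : ℝ, s ≤ t → |g t - g s| ≤ V t - V s := by
    intro s t hst
    have hsplit : eVariationOn g (Iic t) = eVariationOn g (Iic s) + eVariationOn g (Icc s t) := by
      rw [← eVariationOn.union g (isGreatest_Iic (a := s)) (isLeast_Icc hst), Iic_union_Icc_eq_Iic hst]
    have hIcc : eVariationOn g (Icc s t) ≠ ⊤ :=
      ne_top_of_le_ne_top hg (eVariationOn.mono g (subset_univ _))
    have hVts : V t - V s = (eVariationOn g (Icc s t)).toReal := by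
      rw [hV]; simp only
      rw [hsplit, ENNReal.toReal_add (hfin s) hIcc]; ring
    rw [hVts, ← Real.dist_eq]
    have : BoundedVariationOn g (Icc s t) := hg.mono (subset_univ _)
    exact this.dist_le (right_mem_Icc.2 hst) (left_mem_Icc.2 hst)
  -- Cauchy
  have hcauchy : Cauchy (map g atBot) := by
    rw [Metric.cauchy_iff]
    refine ⟨map_neBot, fun ε hε => ?_⟩
    have hlt : ⨅ t, V t < (⨅ t, V t) + ε / 2 := by linarith [half_pos hε]
    obtain ⟨t₀, ht₀⟩ := exists_lt_of_ciInf_lt hlt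
    refine ⟨g '' Iic t₀, image_mem_map (Iic_mem_atBot t₀), ?_⟩
    rintro _ ⟨s, hs, rfl⟩ _ ⟨s', hs', rfl⟩
    rcases le_total s' s with h | h
    · have h1 := hkey s' s h
      have h2 : V s ≤ V t₀ := by
        have := hkey s t₀ hs
        have habs := abs_nonneg (g t₀ - g s)
        linarith [this, abs_nonneg (g t₀ - g s)]
      have h3 : ⨅ t, V t ≤ V s' := ciInf_le hbdd s'
      rw [Real.dist_eq]
      calc |g s - g s'| ≤ V s - V s' := h1
        _ ≤ V t₀ - (⨅ t, V t) := by linarith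
        _ < ε := by linarith
    · have h1 := hkey s s' h
      have h2 : V s' ≤ V t₀ := by linarith [hkey s' t₀ hs', abs_nonneg (g t₀ - g s')]
      have h3 : ⨅ t, V t ≤ V s := ciInf_le hbdd s
      rw [Real.dist_eq, abs_sub_comm]
      calc |g s' - g s| ≤ V s' - V s := h1
        _ ≤ V t₀ - (⨅ t, V t) := by linarith
        _ < ε := by linarith
  obtain ⟨L, hL⟩ := CompleteSpace.complete hcauchy
  exact ⟨L, hL⟩

lemma BVfun.abs_le_bvNorm {g : ℝ → ℝ} (hg : BVfun g) (t : ℝ) : |g t| ≤ bvNorm g := by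
  obtain ⟨L, hL⟩ := hg.exists_lim_atBot
  have hlim : limUnder atBot g = L := hL.limUnder_eq
  have hband : ∀ s : ℝ, |g t| ≤ |g s| + varOn g univ := by
    intro s
    have := hg.dist_le (mem_univ t) (mem_univ s)
    rw [Real.dist_eq] at this
    calc |g t| ≤ |g s| + |g t - g s| := by
          have := abs_sub_abs_le_abs_sub (g t) (g s); linarith [abs_abs (g t)]
      _ ≤ |g s| + varOn g univ := by exact add_le_add (le_refl _) this
  have htend : Tendsto (fun s => |g s| + varOn g univ) atBot (𝓝 (|L| + varOn g univ)) :=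
    (hL.abs).add_const _
  have := ge_of_tendsto htend (Eventually.of_forall hband)
  rwa [bvNorm, hlim]

lemma intInt_abs {g : ℝ → ℝ} (hg : Measurable g) {K : ℝ} (hK : ∀ t, |g t| ≤ K) (a b : ℝ) :
    IntervalIntegrable (fun t => |g t|) volume a b := by
  apply IntervalIntegrable.mono_fun' (g := fun _ => K) intervalIntegrable_const
  · exact (hg.abs).aestronglyMeasurable
  · exact Eventually.of_forall (fun t => by simp [abs_abs]; exact hK t)

lemma mAvg_le {g : ℝ → ℝ} {K : ℝ} (hK : ∀ t, |g t| ≤ K) {a b : ℝ} (hab : a < b) :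
    mAvg g a b ≤ K := by
  have h := intervalIntegral.norm_integral_le_of_norm_le_const
    (C := K) (f := fun t => |g t|) (a := a) (b := b)
    (fun t _ => by simpa [abs_abs] using hK t)
  rw [Real.norm_eq_abs] at h
  have hba : (0:ℝ) < b - a := by linarith
  rw [mAvg, div_le_iff₀ hba]
  refine le_trans (le_abs_self _) (le_trans h ?_)
  rw [abs_of_pos hba]

lemma mAvg_sub_le {g f : ℝ → ℝ} (hgm : Measurable g) (hfm : Measurable f)
    {Kg Kf K : ℝ} (hKg : ∀ t, |g t| ≤ Kg) (hKf : ∀ t, |f t| ≤ Kf)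
    (hK : ∀ t, |g t - f t| ≤ K) {a b : ℝ} (hab : a < b) :
    |mAvg g a b - mAvg f a b| ≤ K := by
  have hba : (0:ℝ) < b - a := by linarith
  have hig := intInt_abs hgm hKg a b
  have hif := intInt_abs hfm hKf a b
  have hsub : mAvg g a b - mAvg f a b
      = (∫ t in a..b, (|g t| - |f t|)) / (b - a) := by
    rw [mAvg, mAvg, div_sub_div_same, ← intervalIntegral.integral_sub hig hif]
  have hbound : |∫ t in a..b, (|g t| - |f t|)| ≤ K * (b - a) := by
    have h := intervalIntegral.norm_integral_le_of_norm_le_const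
      (C := K) (f := fun t => |g t| - |f t|) (a := a) (b := b)
      (fun t _ => by
        rw [Real.norm_eq_abs]
        exact le_trans (abs_abs_sub_abs_le_abs_sub _ _) (hK t))
    rw [Real.norm_eq_abs, abs_of_pos hba] at h
    exact h
  rw [hsub, abs_div, abs_of_pos hba, div_le_iff₀ hba]
  exact hbound

lemma maxSet_nonempty (g : ℝ → ℝ) (x : ℝ) :
    {y | ∃ a b : ℝ, a < b ∧ a ≤ x ∧ x ≤ b ∧ y = mAvg g a b}.Nonempty :=
  ⟨mAvg g (x-1) (x+1), x-1, x+1, by constructor <;> [linarith; exact ⟨by linarith, by linarith, rfl⟩]⟩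

lemma maxSet_bddAbove {g : ℝ → ℝ} {K : ℝ} (hK : ∀ t, |g t| ≤ K) (x : ℝ) :
    BddAbove {y | ∃ a b : ℝ, a < b ∧ a ≤ x ∧ x ≤ b ∧ y = mAvg g a b} := by
  refine ⟨K, ?_⟩
  rintro y ⟨a, b, hab, _, _, rfl⟩
  exact mAvg_le hK hab

lemma uMax_diff_le {g f : ℝ → ℝ} (hgm : Measurable g) (hfm : Measurable f)
    {Kg Kf K : ℝ} (hKg : ∀ t, |g t| ≤ Kg) (hKf : ∀ t, |f t| ≤ Kf)
    (hK : ∀ t, |g t - f t| ≤ K) (x : ℝ) :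
    |uMax g x - uMax f x| ≤ K := by
  have key : ∀ (p q : ℝ → ℝ), Measurable p → Measurable q → ∀ Kp Kq : ℝ,
      (∀ t, |p t| ≤ Kp) → (∀ t, |q t| ≤ Kq) → (∀ t, |p t - q t| ≤ K) →
      uMax p x ≤ uMax q x + K := by
    intro p q hpm hqm Kp Kq hKp hKq hpq
    rw [uMax]
    apply csSup_le (maxSet_nonempty p x)
    rintro y ⟨a, b, hab, hax, hxb, rfl⟩
    have h1 : mAvg p a b ≤ mAvg q a b + K := by
      have := mAvg_sub_le hpm hqm hKp hKq hpq hab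
      have := abs_le.1 this
      linarith [this.2]
    have h2 : mAvg q a b ≤ uMax q x :=
      le_csSup (maxSet_bddAbove hKq x) ⟨a, b, hab, hax, hxb, rfl⟩
    linarith
  have hK' : ∀ t, |f t - g t| ≤ K := fun t => by rw [abs_sub_comm]; exact hK t
  have h1 := key g f hgm hfm Kg Kf hKg hKf hK
  have h2 := key f g hfm hgm Kf Kg hKf hKg hK'
  rw [abs_le]
  constructor <;> linarith

lemma mAvg_tendsto {f : ℝ → ℝ} (hm : Measurable f) {K : ℝ} (hK : ∀ t, |f t| ≤ K)
    {aj bj : ℕ → ℝ} {c d : ℝ} (hcd : c < d)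
    (ha : Tendsto aj atTop (𝓝 c)) (hb : Tendsto bj atTop (𝓝 d)) :
    Tendsto (fun j => mAvg f (aj j) (bj j)) atTop (𝓝 (mAvg f c d)) := by
  have hint : ∀ u v : ℝ, IntervalIntegrable (fun t => |f t|) volume u v :=
    fun u v => intInt_abs hm hK u v
  set N : ℕ → ℝ := fun j => ∫ t in (aj j)..(bj j), |f t| with hN
  set N0 : ℝ := ∫ t in c..d, |f t| with hN0
  have hsplit : ∀ j, N j - N0 = (∫ t in (aj j)..c, |f t|) + (∫ t in d..(bj j), |f t|) := by
    intro j
    have h1 := intervalIntegral.integral_add_adjacent_intervals (hint (aj j) c) (hint c d)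
    have h2 := intervalIntegral.integral_add_adjacent_intervals (hint (aj j) d) (hint d (bj j))
    simp only [hN, hN0]
    rw [← h2, ← h1]
    ring
  have hdiff : Tendsto (fun j => N j - N0) atTop (𝓝 0) := by
    apply squeeze_zero_norm (a := fun j => K * |c - aj j| + K * |bj j - d|)
    · intro j
      rw [Real.norm_eq_abs, hsplit j]
      have b1 := intervalIntegral.norm_integral_le_of_norm_le_const
        (C := K) (f := fun t => |f t|) (a := aj j) (b := c)
        (fun t _ => by simpa [abs_abs] using hK t)
      have b2 := intervalIntegral.norm_integral_le_of_norm_le_const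
        (C := K) (f := fun t => |f t|) (a := d) (b := bj j)
        (fun t _ => by simpa [abs_abs] using hK t)
      rw [Real.norm_eq_abs] at b1 b2
      exact le_trans (abs_add_le _ _) (add_le_add b1 b2)
    · have h1 : Tendsto (fun j => c - aj j) atTop (𝓝 0) := by
        simpa using (tendsto_const_nhds (x := c)).sub ha
      have h2 : Tendsto (fun j => bj j - d) atTop (𝓝 0) := by
        simpa using hb.sub (tendsto_const_nhds (x := d))
      have := ((h1.abs.const_mul K).add (h2.abs.const_mul K))
      simpa using this
  have hNum : Tendsto N atTop (𝓝 N0) := by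
    have := hdiff.add_const N0
    simpa using this
  have hDen : Tendsto (fun j => bj j - aj j) atTop (𝓝 (d - c)) := hb.sub ha
  have hne : d - c ≠ 0 := ne_of_gt (by linarith)
  have := hNum.div hDen hne
  exact this

lemma endpoint_tendsto (aj bj : ℕ → ℝ) (hab : ∀ j, aj j < bj j) (c d : ℝ) (hcd : c < d)
    (hae : ∀ᵐ t : ℝ, Tendsto (fun j => Set.indicator (Set.Ioo (aj j) (bj j)) (fun _ => (1:ℝ)) t)
      atTop (𝓝 (Set.indicator (Set.Ioo c d) (fun _ => (1:ℝ)) t))) :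
    Tendsto aj atTop (𝓝 c) ∧ Tendsto bj atTop (𝓝 d) := by
  set P : ℝ → Prop := fun t =>
    Tendsto (fun j => Set.indicator (Set.Ioo (aj j) (bj j)) (fun _ => (1:ℝ)) t)
      atTop (𝓝 (Set.indicator (Set.Ioo c d) (fun _ => (1:ℝ)) t)) with hP
  have hfind : ∀ u v : ℝ, u < v → ∃ t, t ∈ Ioo u v ∧ P t := by
    intro u v huv
    have hres : volume.restrict (Ioo u v) ≠ 0 := by
      intro h
      rw [MeasureTheory.Measure.restrict_eq_zero, Real.volume_Ioo,
        ENNReal.ofReal_eq_zero] at h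
      linarith
    have : (ae (volume.restrict (Ioo u v))).NeBot := ae_neBot.2 hres
    have h1 : ∀ᵐ t ∂(volume.restrict (Ioo u v)), P t := ae_restrict_of_ae hae
    have h2 : ∀ᵐ t ∂(volume.restrict (Ioo u v)), t ∈ Ioo u v :=
      ae_restrict_mem measurableSet_Ioo
    obtain ⟨t, ht1, ht2⟩ := (h2.and h1).exists
    exact ⟨t, ht1, ht2⟩
  have Hin : ∀ t, t ∈ Ioo c d → P t → ∀ᶠ j in atTop, aj j < t ∧ t < bj j := by
    intro t ht hPt
    rw [hP] at hPt
    simp only [indicator_of_mem ht] at hPt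
    have := hPt.eventually (eventually_gt_nhds (by norm_num : (1:ℝ)/2 < 1))
    filter_upwards [this] with j hj
    by_contra hcon
    have hnm : t ∉ Ioo (aj j) (bj j) := fun hm => hcon ⟨hm.1, hm.2⟩
    rw [indicator_of_notMem hnm] at hj
    norm_num at hj
  have Hout : ∀ t, t ∉ Ioo c d → P t → ∀ᶠ j in atTop, ¬(aj j < t ∧ t < bj j) := by
    intro t ht hPt
    rw [hP] at hPt
    simp only [indicator_of_notMem ht] at hPt
    have := hPt.eventually (eventually_lt_nhds (by norm_num : (0:ℝ) < 1/2))
    filter_upwards [this] with j hj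
    intro hcon
    have hm : t ∈ Ioo (aj j) (bj j) := ⟨hcon.1, hcon.2⟩
    rw [indicator_of_mem hm] at hj
    norm_num at hj
  constructor
  · rw [Metric.tendsto_nhds]
    intro ε hε
    obtain ⟨t₁, ht₁, hPt₁⟩ := hfind c (min d (c+ε)) (lt_min hcd (by linarith))
    obtain ⟨t₂, ht₂, hPt₂⟩ := hfind (c-ε) c (by linarith)
    have h1 := Hin t₁ ⟨ht₁.1, lt_of_lt_of_le ht₁.2 (min_le_left _ _)⟩ hPt₁
    have h2 := Hout t₂ (fun hmem => absurd hmem.1 (not_lt.2 ht₂.2.le)) hPt₂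
    filter_upwards [h1, h2] with j hj1 hj2
    rw [Real.dist_eq, abs_lt]
    have ht₁ε : t₁ < c + ε := lt_of_lt_of_le ht₁.2 (min_le_right _ _)
    have hblow : t₂ < bj j := lt_trans (lt_trans ht₂.2 ht₁.1) hj1.2
    have : ¬ (aj j < t₂) := fun h => hj2 ⟨h, hblow⟩
    constructor
    · push_neg at this; linarith [ht₂.1]
    · linarith [hj1.1]
  · rw [Metric.tendsto_nhds]
    intro ε hε
    obtain ⟨t₃, ht₃, hPt₃⟩ := hfind (max c (d-ε)) d (max_lt hcd (by linarith))
    obtain ⟨t₄, ht₄, hPt₄⟩ := hfind d (d+ε) (by linarith)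
    have h1 := Hin t₃ ⟨lt_of_le_of_lt (le_max_left _ _) ht₃.1, ht₃.2⟩ hPt₃
    have h2 := Hout t₄ (fun hmem => absurd hmem.2 (not_lt.2 ht₄.1.le)) hPt₄
    filter_upwards [h1, h2] with j hj1 hj2
    rw [Real.dist_eq, abs_lt]
    have ht₃ε : d - ε < t₃ := lt_of_le_of_lt (le_max_right _ _) ht₃.1
    have hahigh : aj j < t₄ := lt_trans hj1.1 (lt_trans ht₃.2 ht₄.1)
    have : ¬ (t₄ < bj j) := fun h => hj2 ⟨hahigh, h⟩
    constructor
    · linarith [hj1.2]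
    · push_neg at this; linarith [ht₄.2]

theorem stmt10 (f : ℝ → ℝ) (hf : BVfun f) (fj : ℕ → ℝ → ℝ) (hfj : ∀ j, BVfun (fj j))
    (hconv : Tendsto (fun j => bvNorm (fj j - f)) atTop (𝓝 0))
    (x : ℝ) (aj bj : ℕ → ℝ)
    (hIj : ∀ j, aj j < bj j ∧ aj j ≤ x ∧ x ≤ bj j ∧ mAvg (fj j) (aj j) (bj j) = uMax (fj j) x)
    (c d : ℝ) (hcd : c < d)
    (hae : ∀ᵐ t : ℝ, Tendsto (fun j => Set.indicator (Set.Ioo (aj j) (bj j)) (fun _ => (1:ℝ)) t)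
      atTop (𝓝 (Set.indicator (Set.Ioo c d) (fun _ => (1:ℝ)) t))) :
    mAvg f c d = uMax f x := by
  have hfm := hf.measurable
  have hfK := hf.abs_le_bvNorm
  have hjm : ∀ j, Measurable (fj j) := fun j => (hfj j).measurable
  have hjK : ∀ j t, |fj j t| ≤ bvNorm (fj j) := fun j => (hfj j).abs_le_bvNorm
  have hdK : ∀ j t, |fj j t - f t| ≤ bvNorm (fj j - f) := by
    intro j t
    have := ((hfj j).sub hf).abs_le_bvNorm t
    simpa using this
  obtain ⟨ha, hb⟩ := endpoint_tendsto aj bj (fun j => (hIj j).1) c d hcd hae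
  have hmA := mAvg_tendsto hfm hfK hcd ha hb
  have hA : Tendsto (fun j => mAvg (fj j) (aj j) (bj j)) atTop (𝓝 (mAvg f c d)) := by
    have hdiff : Tendsto (fun j => mAvg (fj j) (aj j) (bj j) - mAvg f (aj j) (bj j))
        atTop (𝓝 0) := by
      apply squeeze_zero_norm (a := fun j => bvNorm (fj j - f))
      · intro j
        rw [Real.norm_eq_abs]
        exact mAvg_sub_le (hjm j) hfm (hjK j) hfK (hdK j) (hIj j).1
      · exact hconv
    have := hdiff.add hmA
    simpa using this
  have hU : Tendsto (fun j => uMax (fj j) x) atTop (𝓝 (uMax f x)) := by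
    have hdiff : Tendsto (fun j => uMax (fj j) x - uMax f x) atTop (𝓝 0) := by
      apply squeeze_zero_norm (a := fun j => bvNorm (fj j - f))
      · intro j
        rw [Real.norm_eq_abs]
        exact uMax_diff_le (hjm j) hfm (hjK j) hfK (hdK j) x
      · exact hconv
    have := hdiff.add_const (uMax f x)
    simpa using this
  have heq : (fun j => mAvg (fj j) (aj j) (bj j)) = fun j => uMax (fj j) x :=
    funext fun j => (hIj j).2.2.2
  rw [heq] at hA
  exact tendsto_nhds_unique hA hU
end

section
/- Let f ∈ BV(ℝ) and x ∈ ℝ. Assume M̃f is differentiable at x, |f| is continuous at x, and there is a bounded interval I_x = (x, a_x) with a_x > x such that (1/(a_x − x))∫_x^{a_x} |f| = M̃f(x) and M̃f(x) > |f|(x). Then (M̃f)'(x) = (1/(a_x − x))·(M̃f(x) − |f|(x)). -/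
open MeasureTheory Filter Set Topology

theorem stmt11 (f : ℝ → ℝ) (hf : BVfun f) (x : ℝ)
    (hdiff : DifferentiableAt ℝ (uMax f) x)
    (hcont : ContinuousAt (fun y => |f y|) x)
    (ax : ℝ) (hax : x < ax)
    (havg : mAvg f x ax = uMax f x)
    (hgt : |f x| < uMax f x) :
    deriv (uMax f) x = (uMax f x - |f x|) / (ax - x) := by
  -- f is measurable and bounded
  obtain ⟨p, q, hp, hq, hpq⟩ :=
    (hf.locallyBoundedVariationOn).exists_monotoneOn_sub_monotoneOn
  have hfm : Measurable f := by
    rw [hpq]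
    exact ((monotoneOn_univ.mp hp).measurable).sub ((monotoneOn_univ.mp hq).measurable)
  have habs : Measurable fun t => |f t| := hfm.abs
  set C : ℝ := |f 0| + (eVariationOn f Set.univ).toReal with hC
  have hbound : ∀ t, |f t| ≤ C := by
    intro t
    have h1 : dist (f t) (f 0) ≤ (eVariationOn f Set.univ).toReal := by
      have := eVariationOn.edist_le f (mem_univ t) (mem_univ 0)
      have h2 := ENNReal.toReal_mono hf this
      rwa [edist_dist, ENNReal.toReal_ofReal dist_nonneg] at h2
    calc |f t| ≤ |f 0| + |f t - f 0| := by
            have := abs_sub_abs_le_abs_sub (f t) (f 0); linarith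
      _ ≤ C := by rw [Real.dist_eq] at h1; linarith
  have hint : ∀ a b : ℝ, IntervalIntegrable (fun t => |f t|) volume a b := by
    intro a b
    have : IntervalIntegrable f volume a b := by
      rw [hpq]
      exact ((monotoneOn_univ.mp hp).intervalIntegrable).sub
        ((monotoneOn_univ.mp hq).intervalIntegrable)
    exact this.abs
  -- averages are bounded by C
  have havg_le : ∀ a b : ℝ, a < b → mAvg f a b ≤ C := by
    intro a b hab
    have h1 : (∫ t in a..b, |f t|) ≤ ∫ t in a..b, C := by
      apply intervalIntegral.integral_mono_on hab.le (hint a b)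
        intervalIntegrable_const
      intro t _; exact hbound t
    rw [intervalIntegral.integral_const, smul_eq_mul] at h1
    rw [mAvg, div_le_iff₀ (by linarith)]
    linarith [h1]
  have hbdd : ∀ z : ℝ, BddAbove {y | ∃ a b : ℝ, a < b ∧ a ≤ z ∧ z ≤ b ∧ y = mAvg f a b} := by
    intro z
    refine ⟨C, ?_⟩
    rintro y ⟨a, b, hab, _, _, rfl⟩
    exact havg_le a b hab
  -- g y = mAvg f y ax
  set I : ℝ := ∫ t in x..ax, |f t| with hI
  set F : ℝ → ℝ := fun y => ∫ t in x..y, |f t| with hF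
  set g : ℝ → ℝ := fun y => (I - F y) / (ax - y) with hg
  have hgx : ∀ y, g y = mAvg f y ax := by
    intro y
    have : (∫ t in y..ax, |f t|) = I - F y := by
      have := intervalIntegral.integral_add_adjacent_intervals (hint y x) (hint x ax)
      have h2 : (∫ t in y..x, |f t|) = - F y := intervalIntegral.integral_symm x y
      rw [← this, h2]; ring
    rw [mAvg, this, hg]
  -- derivative of F at x
  have hFderiv : HasDerivAt F (|f x|) x :=
    intervalIntegral.integral_hasDerivAt_right (hint x x)
      habs.aestronglyMeasurable.stronglyMeasurableAtFilter hcont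
  have hne : ax - x ≠ 0 := by linarith
  have hgderiv : HasDerivAt g ((uMax f x - |f x|) / (ax - x)) x := by
    have h1 : HasDerivAt (fun y => I - F y) (-|f x|) x := (hFderiv.const_sub I)
    have h2 : HasDerivAt (fun y : ℝ => ax - y) (-1) x := by
      simpa using (hasDerivAt_id x).const_sub ax
    have h3 := h1.div h2 hne
    have hFx : F x = 0 := by simp [hF]
    have hux : I = uMax f x * (ax - x) := by
      have := havg
      rw [mAvg] at this
      field_simp at this ⊢
      linarith [this]
    refine HasDerivAt.congr_deriv h3 ?_
    symm
    rw [hFx, hux]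
    field_simp
    ring
  -- uMax ≥ g near x, equality at x
  have heq : uMax f x = g x := by
    rw [hgx x, havg]
  have hmin : IsLocalMin (fun y => uMax f y - g y) x := by
    have hmem : Iio ax ∈ 𝓝 x := Iio_mem_nhds hax
    filter_upwards [hmem] with y hy
    have h1 : g y ≤ uMax f y := by
      rw [hgx y]
      exact le_csSup (hbdd y) ⟨y, ax, hy, le_refl y, le_of_lt hy, rfl⟩
    simp only [heq]
    linarith [h1]
  have hgd : DifferentiableAt ℝ g x := hgderiv.differentiableAt
  have h0 : deriv (fun y => uMax f y - g y) x = 0 := hmin.deriv_eq_zero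
  rw [deriv_fun_sub hdiff hgd] at h0
  rw [hgderiv.deriv] at h0
  linarith [h0]
end

section
/- Let f ∈ BV(ℝ) and let C = {x ∈ ℝ : M̃f(x) = |f|‾(x)}, where |f|‾(x) = limsup_{I ∋ x, |I| → 0} (1/|I|)∫_I |f|. Then for almost every x ∈ C, (M̃f)'(x) = 0. -/
open MeasureTheory Filter Set Topology

/-! ### Auxiliary lemmas -/

section Aux

variable {f : ℝ → ℝ}

instance : Nonempty {h : ℝ // (0:ℝ) < h} := ⟨⟨1, one_pos⟩⟩

lemma bv_abs (hf : BVfun f) : BoundedVariationOn (fun y => |f y|) Set.univ := by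
  have h := lipschitzWith_one_norm.comp_boundedVariationOn (g := f) (s := Set.univ) hf
  simpa [Function.comp_def, Real.norm_eq_abs] using h

lemma bv_measurable (hf : BVfun f) : Measurable f := by
  obtain ⟨p, q, hp, hq, hpq⟩ :=
    hf.locallyBoundedVariationOn.exists_monotoneOn_sub_monotoneOn
  rw [hpq]
  exact ((monotoneOn_univ.1 hp).measurable).sub ((monotoneOn_univ.1 hq).measurable)

lemma bv_countable_discont (hf : BVfun f) : {x | ¬ ContinuousAt f x}.Countable := by
  obtain ⟨p, q, hp, hq, hpq⟩ :=
    hf.locallyBoundedVariationOn.exists_monotoneOn_sub_monotoneOn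
  have hp' := (monotoneOn_univ.1 hp).countable_not_continuousAt
  have hq' := (monotoneOn_univ.1 hq).countable_not_continuousAt
  refine (hp'.union hq').mono ?_
  intro x hx
  simp only [mem_setOf_eq, mem_union]
  by_contra hc
  push_neg at hc
  obtain ⟨h1, h2⟩ := hc
  apply hx
  rw [hpq]
  exact h1.sub h2

lemma bv_bound_s15 (hf : BVfun f) : ∃ B : ℝ, ∀ y, |f y| ≤ B := by
  refine ⟨|f 0| + (eVariationOn f Set.univ).toReal, fun y => ?_⟩
  have h1 : dist (f y) (f 0) ≤ (eVariationOn f Set.univ).toReal := by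
    rw [dist_edist]
    exact ENNReal.toReal_mono hf (eVariationOn.edist_le f (mem_univ y) (mem_univ 0))
  rw [Real.dist_eq] at h1
  have h2 := abs_sub_abs_le_abs_sub (f y) (f 0)
  linarith

lemma bv_intervalIntegrable (hf : BVfun f) (a b : ℝ) :
    IntervalIntegrable (fun t => |f t|) volume a b := by
  obtain ⟨B, hB⟩ := bv_bound_s15 hf
  refine (intervalIntegrable_const (c := B)).mono_fun
    ((bv_measurable hf).abs).aestronglyMeasurable ?_
  refine Filter.Eventually.of_forall (fun y => ?_)
  simp only [Real.norm_eq_abs, abs_abs]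
  exact (hB y).trans (le_abs_self B)

lemma mAvg_nonneg {a b : ℝ} (hab : a < b) : 0 ≤ mAvg f a b :=
  div_nonneg (intervalIntegral.integral_nonneg hab.le (fun t _ => abs_nonneg _))
    (by linarith)

lemma mAvg_le_of (hf : BVfun f) {a b c : ℝ} (hab : a < b)
    (h : ∀ y ∈ Icc a b, |f y| ≤ c) : mAvg f a b ≤ c := by
  rw [mAvg, div_le_iff₀ (by linarith)]
  have h2 := intervalIntegral.integral_mono_on hab.le (bv_intervalIntegrable hf a b)
      (intervalIntegrable_const (c := c)) h
  simpa [intervalIntegral.integral_const, smul_eq_mul, mul_comm] using h2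

lemma le_mAvg_of (hf : BVfun f) {a b c : ℝ} (hab : a < b)
    (h : ∀ y ∈ Icc a b, c ≤ |f y|) : c ≤ mAvg f a b := by
  rw [mAvg, le_div_iff₀ (by linarith)]
  have h2 := intervalIntegral.integral_mono_on hab.le (intervalIntegrable_const (c := c))
      (bv_intervalIntegrable hf a b) h
  simpa [intervalIntegral.integral_const, smul_eq_mul, mul_comm] using h2

lemma mSet_bddAbove (hf : BVfun f) (x : ℝ) :
    BddAbove {y | ∃ a b : ℝ, a < b ∧ a ≤ x ∧ x ≤ b ∧ y = mAvg f a b} := by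
  obtain ⟨B, hB⟩ := bv_bound_s15 hf
  refine ⟨B, fun y hy => ?_⟩
  obtain ⟨a, b, hab, _, _, rfl⟩ := hy
  exact mAvg_le_of hf hab (fun t _ => hB t)

lemma mAvg_le_uMax (hf : BVfun f) {x a b : ℝ} (hab : a < b) (hax : a ≤ x) (hxb : x ≤ b) :
    mAvg f a b ≤ uMax f x :=
  le_csSup (mSet_bddAbove hf x) ⟨a, b, hab, hax, hxb, rfl⟩

/-- At a continuity point, `|f x| ≤ uMax f x`. -/
lemma abs_le_uMax_of_cont (hf : BVfun f) {x : ℝ} (hc : ContinuousAt f x) :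
    |f x| ≤ uMax f x := by
  refine le_of_forall_pos_le_add (fun ε hε => ?_)
  obtain ⟨δ, hδ, hδ'⟩ := Metric.continuousAt_iff.1 hc.abs ε hε
  have h1 : ∀ y ∈ Icc x (x + δ/2), |f x| - ε ≤ |f y| := by
    intro y hy
    have hd : dist y x < δ := by
      rw [Real.dist_eq, abs_lt]
      constructor
      · linarith [hy.1]
      · linarith [hy.2]
    have := hδ' hd
    rw [Real.dist_eq, abs_lt] at this
    linarith [this.1]
  have h2 : |f x| - ε ≤ mAvg f x (x + δ/2) :=
    le_mAvg_of hf (by linarith) h1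
  have h3 := mAvg_le_uMax hf (x := x) (by linarith : x < x + δ/2) le_rfl (by linarith)
  linarith

/-- At a continuity point, `ubar f x = |f x|`. -/
lemma ubar_eq_abs (hf : BVfun f) {x : ℝ} (hc : ContinuousAt f x) :
    ubar f x = |f x| := by
  obtain ⟨B, hB⟩ := bv_bound_s15 hf
  have hBdd : ∀ h : ℝ, BddAbove
      {y | ∃ a b : ℝ, a < b ∧ a ≤ x ∧ x ≤ b ∧ b - a ≤ h ∧ y = mAvg f a b} := by
    intro h
    refine (mSet_bddAbove hf x).mono ?_
    rintro y ⟨a, b, h1, h2, h3, _, rfl⟩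
    exact ⟨a, b, h1, h2, h3, rfl⟩
  have hmem : ∀ (h : ℝ), 0 < h → ∀ r : ℝ, 0 < r → r ≤ h →
      mAvg f x (x + r) ∈
      {y | ∃ a b : ℝ, a < b ∧ a ≤ x ∧ x ≤ b ∧ b - a ≤ h ∧ y = mAvg f a b} := by
    intro h hh r hr hrh
    exact ⟨x, x + r, by linarith, le_rfl, by linarith, by linarith, rfl⟩
  have hS_nonneg : ∀ h : {h : ℝ // (0:ℝ) < h}, (0:ℝ) ≤
      sSup {y | ∃ a b : ℝ, a < b ∧ a ≤ x ∧ x ≤ b ∧ b - a ≤ h.1 ∧ y = mAvg f a b} := by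
    intro h
    refine le_trans (mAvg_nonneg (f := f) (by linarith [h.2] : x < x + h.1)) ?_
    exact le_csSup (hBdd h.1) (hmem h.1 h.2 h.1 h.2 le_rfl)
  have hbddBelow : BddBelow (Set.range fun h : {h : ℝ // (0:ℝ) < h} =>
      sSup {y | ∃ a b : ℝ, a < b ∧ a ≤ x ∧ x ≤ b ∧ b - a ≤ h.1 ∧ y = mAvg f a b}) := by
    refine ⟨0, ?_⟩
    rintro y ⟨h, rfl⟩
    exact hS_nonneg h
  refine le_antisymm ?_ ?_
  · -- ubar ≤ |f x|
    refine le_of_forall_pos_le_add (fun ε hε => ?_)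
    obtain ⟨δ, hδ, hδ'⟩ := Metric.continuousAt_iff.1 hc.abs ε hε
    have key : sSup {y | ∃ a b : ℝ, a < b ∧ a ≤ x ∧ x ≤ b ∧ b - a ≤ δ/2 ∧ y = mAvg f a b}
        ≤ |f x| + ε := by
      refine csSup_le ⟨_, hmem (δ/2) (by linarith) (δ/2) (by linarith) le_rfl⟩ ?_
      rintro y ⟨a, b, h1, h2, h3, h4, rfl⟩
      refine (mAvg_le_of hf h1 (fun t ht => ?_)).trans le_rfl
      have hd : dist t x < δ := by
        rw [Real.dist_eq, abs_lt]
        constructor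
        · linarith [ht.1]
        · linarith [ht.2]
      have := hδ' hd
      rw [Real.dist_eq, abs_lt] at this
      linarith [this.2]
    have := ciInf_le hbddBelow (⟨δ/2, by linarith⟩ : {h : ℝ // (0:ℝ) < h})
    exact le_trans (le_trans this key) le_rfl
  · -- |f x| ≤ ubar
    refine le_of_forall_pos_le_add (fun ε hε => ?_)
    obtain ⟨δ, hδ, hδ'⟩ := Metric.continuousAt_iff.1 hc.abs ε hε
    have key : ∀ h : {h : ℝ // (0:ℝ) < h}, |f x| - ε ≤
        sSup {y | ∃ a b : ℝ, a < b ∧ a ≤ x ∧ x ≤ b ∧ b - a ≤ h.1 ∧ y = mAvg f a b} := by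
      intro h
      set r := min h.1 (δ/2) with hr
      have hrpos : 0 < r := lt_min h.2 (by linarith)
      have hravg : |f x| - ε ≤ mAvg f x (x + r) := by
        refine le_mAvg_of hf (by linarith) (fun t ht => ?_)
        have hd : dist t x < δ := by
          rw [Real.dist_eq, abs_lt]
          have hr2 : r ≤ δ/2 := min_le_right _ _
          constructor
          · linarith [ht.1]
          · linarith [ht.2]
        have := hδ' hd
        rw [Real.dist_eq, abs_lt] at this
        linarith [this.1]
      refine hravg.trans (le_csSup (hBdd h.1) ?_)
      exact hmem h.1 h.2 r hrpos (min_le_left _ _)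
    have := le_ciInf key
    rw [ubar]
    linarith
end Aux

theorem stmt15 (f : ℝ → ℝ) (hf : BVfun f) :
    ∀ᵐ x : ℝ, uMax f x = ubar f x → deriv (uMax f) x = 0 := by
  have habs : BoundedVariationOn (fun y => |f y|) Set.univ := bv_abs hf
  have hdiff : ∀ᵐ x : ℝ, DifferentiableAt ℝ (fun y => |f y|) x :=
    habs.locallyBoundedVariationOn.ae_differentiableAt
  have hcont : ∀ᵐ x : ℝ, ContinuousAt f x := by
    have h0 : volume {x | ¬ ContinuousAt f x} = 0 :=
      (bv_countable_discont hf).measure_zero _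
    exact ae_iff.2 h0
  filter_upwards [hdiff, hcont] with x hdx hcx hEq
  have hub : ubar f x = |f x| := ubar_eq_abs hf hcx
  have hMx : uMax f x = |f x| := hEq.trans hub
  -- every average of an interval containing x is at most |f x|
  have havg : ∀ a b : ℝ, a < b → a ≤ x → x ≤ b → mAvg f a b ≤ |f x| := by
    intro a b h1 h2 h3
    rw [← hMx]
    exact mAvg_le_uMax hf h1 h2 h3
  -- Step 1: deriv (|f ·|) x = 0
  have hg0 : deriv (fun y => |f y|) x = 0 := by
    by_contra hne
    have hd : HasDerivAt (fun y => |f y|) (deriv (fun y => |f y|) x) x := hdx.hasDerivAt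
    set c := deriv (fun y => |f y|) x with hc
    rcases Ne.lt_or_gt hne with hneg | hpos
    · -- c < 0 : use left interval
      have hlo := (hasDerivAt_iff_isLittleO.1 hd).def (show (0:ℝ) < -c/2 by linarith)
      rw [Metric.eventually_nhds_iff] at hlo
      obtain ⟨δ, hδ, hδ'⟩ := hlo
      set r := δ/2 with hr
      have hrpos : 0 < r := by positivity
      have hpt : ∀ y ∈ Icc (x - r) x, |f x| + (-c)/2 * (x - y) ≤ |f y| := by
        intro y hy
        rcases eq_or_lt_of_le hy.2 with rfl | hyx
        · simp
        · have hd2 : dist y x < δ := by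
            rw [Real.dist_eq, abs_lt]
            constructor
            · linarith [hy.1]
            · linarith
          have h3 := hδ' hd2
          simp only [Real.norm_eq_abs, smul_eq_mul] at h3
          rw [abs_le] at h3
          have h4 : |y - x| = x - y := by
            rw [abs_of_nonpos (by linarith)]; ring
          rw [h4] at h3
          nlinarith [h3.1, h3.2]
      have hInt1 : IntervalIntegrable (fun y => |f y|) volume (x - r) x :=
        bv_intervalIntegrable hf _ _
      have hcont2 : Continuous (fun y : ℝ => |f x| + (-c)/2 * (x - y)) :=
        continuous_const.add (continuous_const.mul (continuous_const.sub continuous_id))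
      have hInt2 : IntervalIntegrable (fun y => |f x| + (-c)/2 * (x - y)) volume (x - r) x :=
        hcont2.intervalIntegrable _ _
      have hmono := intervalIntegral.integral_mono_on (by linarith) hInt2 hInt1 hpt
      have hidI : IntervalIntegrable (fun y : ℝ => y) volume (x - r) x :=
        continuous_id.intervalIntegrable _ _
      have hlinI : IntervalIntegrable (fun y : ℝ => (-c)/2 * (x - y)) volume (x - r) x :=
        (continuous_const.mul (continuous_const.sub continuous_id)).intervalIntegrable _ _
      have hxy : ∫ y in (x-r)..x, (x - y) = r^2/2 := by
        rw [intervalIntegral.integral_sub (intervalIntegrable_const) hidI]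
        rw [integral_id, intervalIntegral.integral_const]
        simp only [smul_eq_mul]
        ring
      have hcomp : ∫ y in (x-r)..x, (|f x| + (-c)/2 * (x - y)) =
          r * |f x| + (-c)/2 * (r^2/2) := by
        rw [intervalIntegral.integral_add (intervalIntegrable_const) hlinI]
        rw [intervalIntegral.integral_const_mul, hxy, intervalIntegral.integral_const]
        simp only [smul_eq_mul]
        ring
      have hupper : ∫ y in (x-r)..x, |f y| ≤ r * |f x| := by
        have h5 := havg (x - r) x (by linarith) (by linarith) le_rfl
        rw [mAvg, div_le_iff₀ (by linarith)] at h5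
        calc ∫ y in (x-r)..x, |f y| ≤ |f x| * (x - (x - r)) := h5
          _ = r * |f x| := by ring
      have h7 : 0 < (-c)/2 * (r^2/2) := mul_pos (by linarith) (by positivity)
      linarith [hmono, hcomp, hupper]
    · -- c > 0 : use right interval
      have hlo := (hasDerivAt_iff_isLittleO.1 hd).def (show (0:ℝ) < c/2 by linarith)
      rw [Metric.eventually_nhds_iff] at hlo
      obtain ⟨δ, hδ, hδ'⟩ := hlo
      set r := δ/2 with hr
      have hrpos : 0 < r := by positivity
      have hpt : ∀ y ∈ Icc x (x + r), |f x| + c/2 * (y - x) ≤ |f y| := by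
        intro y hy
        rcases eq_or_lt_of_le hy.1 with rfl | hyx
        · simp
        · have hd2 : dist y x < δ := by
            rw [Real.dist_eq, abs_lt]
            constructor
            · linarith
            · linarith [hy.2]
          have h3 := hδ' hd2
          simp only [Real.norm_eq_abs, smul_eq_mul] at h3
          rw [abs_le] at h3
          have h4 : |y - x| = y - x := abs_of_pos (by linarith)
          rw [h4] at h3
          nlinarith [h3.1, h3.2]
      have hInt1 : IntervalIntegrable (fun y => |f y|) volume x (x + r) :=
        bv_intervalIntegrable hf _ _
      have hcont2 : Continuous (fun y : ℝ => |f x| + c/2 * (y - x)) :=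
        continuous_const.add (continuous_const.mul (continuous_id.sub continuous_const))
      have hInt2 : IntervalIntegrable (fun y => |f x| + c/2 * (y - x)) volume x (x + r) :=
        hcont2.intervalIntegrable _ _
      have hmono := intervalIntegral.integral_mono_on (by linarith) hInt2 hInt1 hpt
      have hidI : IntervalIntegrable (fun y : ℝ => y) volume x (x + r) :=
        continuous_id.intervalIntegrable _ _
      have hlinI : IntervalIntegrable (fun y : ℝ => c/2 * (y - x)) volume x (x + r) :=
        (continuous_const.mul (continuous_id.sub continuous_const)).intervalIntegrable _ _
      have hxy : ∫ y in x..(x+r), (y - x) = r^2/2 := by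
        rw [intervalIntegral.integral_sub hidI (intervalIntegrable_const)]
        rw [integral_id, intervalIntegral.integral_const]
        simp only [smul_eq_mul]
        ring
      have hcomp : ∫ y in x..(x+r), (|f x| + c/2 * (y - x)) =
          r * |f x| + c/2 * (r^2/2) := by
        rw [intervalIntegral.integral_add (intervalIntegrable_const) hlinI]
        rw [intervalIntegral.integral_const_mul, hxy, intervalIntegral.integral_const]
        simp only [smul_eq_mul]
        ring
      have hupper : ∫ y in x..(x+r), |f y| ≤ r * |f x| := by
        have h5 := havg x (x + r) (by linarith) le_rfl (by linarith)
        rw [mAvg, div_le_iff₀ (by linarith)] at h5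
        calc ∫ y in x..(x+r), |f y| ≤ |f x| * (x + r - x) := h5
          _ = r * |f x| := by ring
      have h7 : 0 < c/2 * (r^2/2) := mul_pos (by linarith) (by positivity)
      linarith [hmono, hcomp, hupper]
  -- Step 2: squeeze the derivative of uMax
  by_cases hM : DifferentiableAt ℝ (uMax f) x
  swap
  · exact deriv_zero_of_not_differentiableAt hM
  have hMd : HasDerivAt (uMax f) (deriv (uMax f) x) x := hM.hasDerivAt
  have hgd : HasDerivAt (fun y => |f y|) 0 x := hg0 ▸ hdx.hasDerivAt
  have hMslope := hasDerivAt_iff_tendsto_slope.1 hMd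
  have hgslope := hasDerivAt_iff_tendsto_slope.1 hgd
  have hmeets : ∀ a b : ℝ, a < b → (Ioo a b ∩ {y | ContinuousAt f y}).Nonempty := by
    intro a b hab
    by_contra hcon
    rw [not_nonempty_iff_eq_empty] at hcon
    have hsub : Ioo a b ⊆ {y | ¬ ContinuousAt f y} := by
      intro y hy
      intro hyc
      exact absurd (⟨y, hy, hyc⟩ : (Ioo a b ∩ {y | ContinuousAt f y}).Nonempty)
        (by rw [hcon]; exact not_nonempty_empty)
    have h6 := measure_mono_null hsub ((bv_countable_discont hf).measure_zero volume)
    rw [Real.volume_Ioo] at h6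
    have := ENNReal.ofReal_pos.2 (by linarith : (0:ℝ) < b - a)
    exact this.ne' h6
  -- right side: 0 ≤ deriv
  have hsub_r : Ioi x ∩ {y | ContinuousAt f y} ⊆ {x}ᶜ := by
    rintro y ⟨hy, _⟩
    exact ne_of_gt hy
  have hne_r : (𝓝[Ioi x ∩ {y | ContinuousAt f y}] x).NeBot := by
    rw [← mem_closure_iff_nhdsWithin_neBot, Metric.mem_closure_iff]
    intro ε hε
    obtain ⟨y, hy1, hy2⟩ := hmeets x (x + ε) (by linarith)
    refine ⟨y, ⟨hy1.1, hy2⟩, ?_⟩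
    rw [Real.dist_eq, abs_lt]
    constructor
    · linarith [hy1.2]
    · linarith [hy1.1]
  have h1 : (0:ℝ) ≤ deriv (uMax f) x := by
    have tg : Tendsto (slope (fun y => |f y|) x)
        (𝓝[Ioi x ∩ {y | ContinuousAt f y}] x) (𝓝 0) :=
      hgslope.mono_left (nhdsWithin_mono x hsub_r)
    have tM : Tendsto (slope (uMax f) x)
        (𝓝[Ioi x ∩ {y | ContinuousAt f y}] x) (𝓝 (deriv (uMax f) x)) :=
      hMslope.mono_left (nhdsWithin_mono x hsub_r)
    refine le_of_tendsto_of_tendsto tg tM ?_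
    filter_upwards [eventually_mem_nhdsWithin] with y hy
    have hyx : x < y := hy.1
    have hgy : |f y| ≤ uMax f y := abs_le_uMax_of_cont hf hy.2
    rw [slope_def_field, slope_def_field, hMx]
    have h0 : (0:ℝ) ≤ (uMax f y - |f y|) / (y - x) :=
      div_nonneg (by linarith) (by linarith)
    have hid : (|f y| - |f x|) / (y - x) + (uMax f y - |f y|) / (y - x) =
        (uMax f y - |f x|) / (y - x) := by
      rw [← add_div]
      ring_nf
    linarith
  -- left side: deriv ≤ 0
  have hsub_l : Iio x ∩ {y | ContinuousAt f y} ⊆ {x}ᶜ := by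
    rintro y ⟨hy, _⟩
    exact ne_of_lt hy
  have hne_l : (𝓝[Iio x ∩ {y | ContinuousAt f y}] x).NeBot := by
    rw [← mem_closure_iff_nhdsWithin_neBot, Metric.mem_closure_iff]
    intro ε hε
    obtain ⟨y, hy1, hy2⟩ := hmeets (x - ε) x (by linarith)
    refine ⟨y, ⟨hy1.2, hy2⟩, ?_⟩
    rw [Real.dist_eq, abs_lt]
    constructor
    · linarith [hy1.2]
    · linarith [hy1.1]
  have h2 : deriv (uMax f) x ≤ 0 := by
    have tg : Tendsto (slope (fun y => |f y|) x)
        (𝓝[Iio x ∩ {y | ContinuousAt f y}] x) (𝓝 0) :=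
      hgslope.mono_left (nhdsWithin_mono x hsub_l)
    have tM : Tendsto (slope (uMax f) x)
        (𝓝[Iio x ∩ {y | ContinuousAt f y}] x) (𝓝 (deriv (uMax f) x)) :=
      hMslope.mono_left (nhdsWithin_mono x hsub_l)
    refine le_of_tendsto_of_tendsto tM tg ?_
    filter_upwards [eventually_mem_nhdsWithin] with y hy
    have hyx : y < x := hy.1
    have hgy : |f y| ≤ uMax f y := abs_le_uMax_of_cont hf hy.2
    rw [slope_def_field, slope_def_field, hMx]
    have h0 : (0:ℝ) ≤ (|f y| - uMax f y) / (y - x) :=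
      div_nonneg_of_nonpos (by linarith) (by linarith)
    have hid : (uMax f y - |f x|) / (y - x) + (|f y| - uMax f y) / (y - x) =
        (|f y| - |f x|) / (y - x) := by
      rw [← add_div]
      ring_nf
    linarith
  linarith
end

section
/- Let A = ⋃_{k=1}^∞ (4k−2, 4k), f = χ_{(−∞,0) ∪ A}, and f_n = f + (1/n)·χ_{(0, 4n+2)}. Then ‖f_n − f‖_{BV} → 0 but ‖M̃f_n − M̃f‖_{BV} does not tend to 0. In particular: M̃f ≡ 1 on ℝ; for each n, M̃f_n(x) = 1 + 1/n for x ∈ {3, 7, …, 4n−1}; and for n ≥ 3, M̃f_n(x) ≤ 1 for x ∈ {1, 5, …, 4n+1}; hence Var(M̃f_n − M̃f) ≥ 2. -/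
open MeasureTheory Filter Set Topology

noncomputable def FF (K : ℕ) (t : ℝ) : ℝ :=
  ∑ k ∈ Finset.range K, (min t (4*k+4) - min t (4*k+2))

lemma minc {s t c d : ℝ} (hst : s ≤ t) (hcd : c ≤ d) :
    min t c - min s c ≤ min t d - min s d := by
  simp only [min_def]; split_ifs <;> linarith

lemma min_diff_nonneg {s t c : ℝ} (hst : s ≤ t) : 0 ≤ min t c - min s c := by
  simp only [min_def]; split_ifs <;> linarith

lemma min_diff_le {s t c : ℝ} (hst : s ≤ t) : min t c - min s c ≤ t - s := by
  simp only [min_def]; split_ifs <;> linarith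

lemma FF_succ (K : ℕ) (t : ℝ) :
    FF (K+1) t = FF K t + (min t (4*K+4) - min t (4*K+2)) := by
  simp [FF, Finset.sum_range_succ]; ring

lemma FF_nonneg (K : ℕ) (t : ℝ) : 0 ≤ FF K t :=
  Finset.sum_nonneg fun k _ => sub_nonneg.2 (min_le_min le_rfl (by linarith))

lemma FF_mono (K : ℕ) {s t : ℝ} (hst : s ≤ t) : FF K s ≤ FF K t := by
  apply Finset.sum_le_sum
  intro k _
  have h1 := minc (c := (4*(k:ℝ)+2)) (d := (4*(k:ℝ)+4)) hst (by linarith)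
  linarith

lemma FF_low (K : ℕ) {t : ℝ} (h : t ≤ 2) : FF K t = 0 :=
  Finset.sum_eq_zero fun k _ => by
    have hk : (0:ℝ) ≤ (k:ℝ) := k.cast_nonneg
    rw [min_eq_left (by linarith), min_eq_left (by linarith)]
    ring

lemma FF_top (K : ℕ) {t : ℝ} (h : 4*K+2 ≤ t) : FF K t = 2*K := by
  have : FF K t = ∑ k ∈ Finset.range K, (2:ℝ) := by
    apply Finset.sum_congr rfl
    intro k hk
    have hkK : (k:ℝ) ≤ (K:ℝ) - 1 := by
      have h1 := Finset.mem_range.1 hk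
      have : (k:ℝ) + 1 ≤ (K:ℝ) := by exact_mod_cast h1
      linarith
    rw [min_eq_right (by linarith), min_eq_right (by linarith)]
    ring
  rw [this, Finset.sum_const, Finset.card_range]
  simp [mul_comm]

lemma FF_anchor {K j : ℕ} (hjK : j ≤ K) {r : ℝ} (h0 : 0 ≤ r) (h2 : r ≤ 2) :
    FF K (4*j+r) = 2*j := by
  have : FF K (4*j+r) = ∑ k ∈ Finset.range K, (if k < j then (2:ℝ) else 0) := by
    apply Finset.sum_congr rfl
    intro k _
    by_cases hk : k < j
    · have hk' : (k:ℝ) + 1 ≤ (j:ℝ) := by exact_mod_cast hk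
      rw [min_eq_right (by linarith), min_eq_right (by linarith), if_pos hk]
      ring
    · have hk' : (j:ℝ) ≤ (k:ℝ) := by exact_mod_cast Nat.le_of_not_lt hk
      rw [min_eq_left (by linarith), min_eq_left (by linarith), if_neg hk]
      ring
  rw [this, ← Finset.sum_filter]
  have hf : (Finset.range K).filter (fun k => k < j) = Finset.range j := by
    ext x
    simp only [Finset.mem_filter, Finset.mem_range]
    omega
  rw [hf, Finset.sum_const, Finset.card_range]
  simp [mul_comm]

lemma FF_lip (K : ℕ) {s t : ℝ} (hst : s ≤ t) : FF K t - FF K s ≤ t - s := by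
  have aux : ∀ K : ℕ, FF K t - FF K s ≤ min t (4*K) - min s (4*K) := by
    intro K
    induction K with
    | zero => simp [FF, min_diff_nonneg hst]
    | succ K ih =>
      rw [FF_succ, FF_succ]
      push_cast
      have h1 : min t (4*(K:ℝ)) - min s (4*(K:ℝ)) ≤ min t (4*(K:ℝ)+2) - min s (4*(K:ℝ)+2) :=
        minc hst (by linarith)
      have h2 : (4:ℝ)*((K:ℝ)+1) = 4*(K:ℝ)+4 := by ring
      rw [h2]
      linarith
  calc FF K t - FF K s ≤ min t (4*K) - min s (4*K) := aux K
    _ ≤ t - s := min_diff_le hst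

lemma FF_le_half {K : ℕ} {t : ℝ} (h0 : 0 ≤ t) (h : t ≤ 4*K+2) : FF K t ≤ t/2 := by
  induction K with
  | zero => push_cast at h; simp [FF]; linarith
  | succ K ih =>
    push_cast at h
    rcases le_or_gt t (4*K+2) with hle | hgt
    · rw [FF_succ, min_eq_left (by linarith : t ≤ 4*(K:ℝ)+4),
        min_eq_left (by linarith : t ≤ 4*(K:ℝ)+2)]
      have := ih hle
      linarith
    · rw [FF_succ, FF_top K hgt.le, min_eq_right hgt.le]
      rcases le_or_gt t (4*K+4) with h4 | h4
      · rw [min_eq_left h4]; linarith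
      · rw [min_eq_right h4.le]; linarith

lemma FF_ge {K : ℕ} {t : ℝ} (h : t ≤ 4*K+2) : t/2 - 1 ≤ FF K t := by
  induction K with
  | zero => push_cast at h; simp [FF]; linarith
  | succ K ih =>
    push_cast at h
    rcases le_or_gt t (4*K+2) with hle | hgt
    · rw [FF_succ, min_eq_left (by linarith : t ≤ 4*(K:ℝ)+4),
        min_eq_left (by linarith : t ≤ 4*(K:ℝ)+2)]
      have := ih hle
      linarith
    · rw [FF_succ, FF_top K hgt.le, min_eq_right hgt.le]
      rcases le_or_gt t (4*K+4) with h4 | h4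
      · rw [min_eq_left h4]; linarith
      · rw [min_eq_right h4.le]; linarith

lemma II {s : Set ℝ} (hs : MeasurableSet s) (c a b : ℝ) :
    IntervalIntegrable (s.indicator (fun _ => c)) volume a b := by
  rw [intervalIntegrable_iff]
  refine (MeasureTheory.integrableOn_const (ne_of_lt ?_) enorm_ne_top).indicator hs
  rw [Set.uIoc_eq_union]
  refine lt_of_le_of_lt (measure_union_le _ _) ?_
  rw [Real.volume_Ioc, Real.volume_Ioc]
  exact ENNReal.add_lt_top.2 ⟨ENNReal.ofReal_lt_top, ENNReal.ofReal_lt_top⟩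

lemma toReal_ofReal' (x : ℝ) : (ENNReal.ofReal x).toReal = max x 0 := by
  rcases le_or_gt 0 x with h | h
  · rw [ENNReal.toReal_ofReal h, max_eq_left h]
  · rw [ENNReal.ofReal_of_nonpos h.le, max_eq_right h.le]; simp

lemma vol_ioo_ioc {a b c d : ℝ} :
    (volume (Ioc a b ∩ Ioo c d)).toReal = max (min d b - max c a) 0 := by
  have h1 : volume (Ioc a b ∩ Ioo c d) = volume (Ioc (max c a) (min d b)) := by
    apply le_antisymm
    · apply measure_mono
      rintro x ⟨⟨h3, h4⟩, h1, h2⟩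
      exact ⟨max_lt h1 h3, le_min h2.le h4⟩
    · have hsub : Ioc (max c a) (min d b) ⊆ (Ioc a b ∩ Ioo c d) ∪ {d} := by
        rintro x ⟨h1, h2⟩
        by_cases hx : x = d
        · exact Or.inr (by simp [hx])
        · left
          have hxd : x < d := lt_of_le_of_ne (h2.trans (min_le_left _ _)) hx
          exact ⟨⟨(le_max_right c a).trans_lt h1, h2.trans (min_le_right _ _)⟩,
            (le_max_left c a).trans_lt h1, hxd⟩
      calc volume (Ioc (max c a) (min d b)) ≤ volume ((Ioc a b ∩ Ioo c d) ∪ {d}) :=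
            measure_mono hsub
        _ ≤ volume (Ioc a b ∩ Ioo c d) + volume ({d} : Set ℝ) := measure_union_le _ _
        _ = volume (Ioc a b ∩ Ioo c d) := by rw [Real.volume_singleton, add_zero]
  rw [h1, Real.volume_Ioc, toReal_ofReal']

lemma clampid {a b c d : ℝ} (hab : a ≤ b) (hcd : c ≤ d) :
    max (min d b - max c a) 0 = (min b d - min b c) - (min a d - min a c) := by
  simp only [min_def, max_def]; split_ifs <;> linarith

lemma intIoo {a b c d : ℝ} (hab : a ≤ b) (hcd : c ≤ d) :
    ∫ t in a..b, (Ioo c d).indicator (fun _ => (1:ℝ)) t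
      = (min b d - min b c) - (min a d - min a c) := by
  rw [intervalIntegral.integral_of_le hab, setIntegral_indicator measurableSet_Ioo,
    setIntegral_const, smul_eq_mul, mul_one, measureReal_def, vol_ioo_ioc, clampid hab hcd]

lemma intIio {a b : ℝ} (hab : a ≤ b) :
    ∫ t in a..b, (Iio (0:ℝ)).indicator (fun _ => (1:ℝ)) t = min b 0 - min a 0 := by
  rw [intervalIntegral.integral_of_le hab, setIntegral_indicator measurableSet_Iio,
    setIntegral_const, smul_eq_mul, mul_one]
  have h1 : volume (Ioc a b ∩ Iio 0) = volume (Ioc a (min b 0)) := by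
    apply le_antisymm
    · apply measure_mono
      rintro x ⟨⟨h3, h4⟩, h1⟩
      exact ⟨h3, le_min h4 h1.le⟩
    · have hsub : Ioc a (min b 0) ⊆ (Ioc a b ∩ Iio 0) ∪ {0} := by
        rintro x ⟨h1, h2⟩
        by_cases hx : x = 0
        · exact Or.inr (by simp [hx])
        · exact Or.inl ⟨⟨h1, h2.trans (min_le_left _ _)⟩,
            lt_of_le_of_ne (h2.trans (min_le_right _ _)) hx⟩
      calc volume (Ioc a (min b 0)) ≤ volume ((Ioc a b ∩ Iio 0) ∪ {0}) := measure_mono hsub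
        _ ≤ volume (Ioc a b ∩ Iio 0) + volume ({(0:ℝ)} : Set ℝ) := measure_union_le _ _
        _ = volume (Ioc a b ∩ Iio 0) := by rw [Real.volume_singleton, add_zero]
  rw [measureReal_def, h1, Real.volume_Ioc, toReal_ofReal']
  simp only [min_def, max_def]; split_ifs <;> linarith

noncomputable def UA : Set ℝ := ⋃ k : ℕ, Set.Ioo (4 * (k : ℝ) + 2) (4 * (k : ℝ) + 4)

noncomputable def ff : ℝ → ℝ := Set.indicator (Set.Iio (0:ℝ) ∪ UA) (fun _ => (1:ℝ))

noncomputable def ffn (n : ℕ) : ℝ → ℝ :=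
  ff + Set.indicator (Set.Ioo (0:ℝ) (4 * (n : ℝ) + 2)) (fun _ => 1 / (n : ℝ))

noncomputable def psin (n : ℕ) (t : ℝ) : ℝ := min t (4*(n:ℝ)+2) - min t 0

lemma UA_meas : MeasurableSet UA := MeasurableSet.iUnion fun _ => measurableSet_Ioo

lemma ff_intgr (a b : ℝ) : IntervalIntegrable ff volume a b :=
  II (measurableSet_Iio.union UA_meas) 1 a b

lemma ffn_intgr (n : ℕ) (a b : ℝ) : IntervalIntegrable (ffn n) volume a b :=
  (ff_intgr a b).add (II measurableSet_Ioo _ a b)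

lemma ff_nonneg (t : ℝ) : 0 ≤ ff t := Set.indicator_nonneg (fun _ _ => zero_le_one) t

lemma ff_le_one (t : ℝ) : ff t ≤ 1 := by
  unfold ff; by_cases h : t ∈ Set.Iio (0:ℝ) ∪ UA
  · rw [Set.indicator_of_mem h]
  · rw [Set.indicator_of_notMem h]; norm_num

lemma ffn_nonneg (n : ℕ) (t : ℝ) : 0 ≤ ffn n t := by
  have h2 : 0 ≤ Set.indicator (Set.Ioo (0:ℝ) (4*(n:ℝ)+2)) (fun _ => 1/(n:ℝ)) t :=
    Set.indicator_nonneg (fun _ _ => by positivity) t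
  exact add_nonneg (ff_nonneg t) h2

lemma ffn_le (n : ℕ) (t : ℝ) : ffn n t ≤ 1 + 1/(n:ℝ) := by
  have h2 : Set.indicator (Set.Ioo (0:ℝ) (4*(n:ℝ)+2)) (fun _ => 1/(n:ℝ)) t ≤ 1/(n:ℝ) := by
    by_cases h : t ∈ Set.Ioo (0:ℝ) (4*(n:ℝ)+2)
    · rw [Set.indicator_of_mem h]
    · rw [Set.indicator_of_notMem h]; positivity
  exact add_le_add (ff_le_one t) h2

lemma ff_decomp {K : ℕ} {t : ℝ} (ht : t ≤ 4*K+2) :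
    ff t = (Set.Iio (0:ℝ)).indicator (fun _ => (1:ℝ)) t
      + ∑ k ∈ Finset.range K, (Set.Ioo (4*(k:ℝ)+2) (4*(k:ℝ)+4)).indicator (fun _ => (1:ℝ)) t := by
  by_cases h0 : t < 0
  · have hm : t ∈ Set.Iio (0:ℝ) ∪ UA := Or.inl h0
    rw [show ff t = 1 from Set.indicator_of_mem hm _,
      Set.indicator_of_mem (show t ∈ Set.Iio (0:ℝ) from h0)]
    rw [Finset.sum_eq_zero]
    · ring
    · intro k _
      apply Set.indicator_of_notMem
      rintro ⟨h1, _⟩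
      have : (0:ℝ) ≤ 4*(k:ℝ)+2 := by positivity
      linarith
  · by_cases hU : t ∈ UA
    · obtain ⟨k, hk⟩ := Set.mem_iUnion.1 hU
      have hkK : k < K := by
        by_contra hcon
        have hc : (K:ℝ) ≤ (k:ℝ) := Nat.cast_le.2 (Nat.le_of_not_lt hcon)
        have := hk.1
        linarith
      rw [show ff t = 1 from Set.indicator_of_mem (show t ∈ Set.Iio (0:ℝ) ∪ UA from Or.inr hU) _,
        Set.indicator_of_notMem (show t ∉ Set.Iio (0:ℝ) from h0),
        Finset.sum_eq_single_of_mem k (Finset.mem_range.2 hkK)]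
      · rw [Set.indicator_of_mem (show t ∈ Set.Ioo (4*(k:ℝ)+2) (4*(k:ℝ)+4) from hk)]
        ring
      · intro j _ hjk
        apply Set.indicator_of_notMem
        rintro ⟨h1, h2⟩
        rcases lt_or_gt_of_ne hjk with hj | hj
        · have hcast : (j:ℝ) + 1 ≤ (k:ℝ) := by exact_mod_cast hj
          have := hk.1; linarith
        · have hcast : (k:ℝ) + 1 ≤ (j:ℝ) := by exact_mod_cast hj
          have := hk.2; linarith
    · have hnm : t ∉ Set.Iio (0:ℝ) ∪ UA := by rintro (h | h); exacts [h0 h, hU h]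
      rw [show ff t = 0 from Set.indicator_of_notMem hnm _, Set.indicator_of_notMem (show t ∉ Set.Iio (0:ℝ) from h0),
        Finset.sum_eq_zero]
      · ring
      · intro j _
        apply Set.indicator_of_notMem
        intro hj
        exact hU (Set.mem_iUnion.2 ⟨j, hj⟩)

lemma intFF {K : ℕ} {a b : ℝ} (hab : a ≤ b) (hbK : b ≤ 4*K+2) :
    ∫ t in a..b, ff t = (min b 0 - min a 0) + (FF K b - FF K a) := by
  have hcong : Set.EqOn ff (fun t => (Set.Iio (0:ℝ)).indicator (fun _ => (1:ℝ)) t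
      + ∑ k ∈ Finset.range K, (Set.Ioo (4*(k:ℝ)+2) (4*(k:ℝ)+4)).indicator (fun _ => (1:ℝ)) t)
      (Set.uIcc a b) := by
    intro t htm
    rw [Set.uIcc_of_le hab] at htm
    exact ff_decomp (le_trans htm.2 hbK)
  have hsum : IntervalIntegrable (fun t => ∑ k ∈ Finset.range K,
      (Set.Ioo (4*(k:ℝ)+2) (4*(k:ℝ)+4)).indicator (fun _ => (1:ℝ)) t) volume a b := by
    have := IntervalIntegrable.sum (Finset.range K)
      (fun k _ => II (measurableSet_Ioo (a := (4*(k:ℝ)+2)) (b := (4*(k:ℝ)+4))) 1 a b)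
    have heq : (∑ i ∈ Finset.range K, (Set.Ioo (4*(i:ℝ)+2) (4*(i:ℝ)+4)).indicator (fun _ => (1:ℝ)))
        = fun t => ∑ k ∈ Finset.range K, (Set.Ioo (4*(k:ℝ)+2) (4*(k:ℝ)+4)).indicator (fun _ => (1:ℝ)) t := by
      funext t; rw [Finset.sum_apply]
    rw [heq] at this; exact this
  rw [intervalIntegral.integral_congr hcong,
    intervalIntegral.integral_add (II measurableSet_Iio 1 a b) hsum,
    intIio hab, intervalIntegral.integral_finset_sum (fun k _ => II measurableSet_Ioo 1 a b)]
  have : ∀ k ∈ Finset.range K,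
      (∫ t in a..b, (Set.Ioo (4*(k:ℝ)+2) (4*(k:ℝ)+4)).indicator (fun _ => (1:ℝ)) t)
      = (min b (4*(k:ℝ)+4) - min b (4*(k:ℝ)+2)) - (min a (4*(k:ℝ)+4) - min a (4*(k:ℝ)+2)) := by
    intro k _
    exact intIoo hab (by linarith)
  rw [Finset.sum_congr rfl this, Finset.sum_sub_distrib]
  unfold FF
  ring

lemma ind_const_eq (s : Set ℝ) (c : ℝ) :
    s.indicator (fun _ => c) = fun t => c * s.indicator (fun _ => (1:ℝ)) t := by
  funext t
  by_cases h : t ∈ s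
  · rw [Set.indicator_of_mem h, Set.indicator_of_mem h]; ring
  · rw [Set.indicator_of_notMem h, Set.indicator_of_notMem h]; ring

lemma intFFn {n K : ℕ} {a b : ℝ} (hab : a ≤ b) (hbK : b ≤ 4*K+2) :
    ∫ t in a..b, ffn n t
      = (min b 0 - min a 0) + (FF K b - FF K a) + (1/(n:ℝ)) * (psin n b - psin n a) := by
  have h2 : ∫ t in a..b, (Set.Ioo (0:ℝ) (4*(n:ℝ)+2)).indicator (fun _ => 1/(n:ℝ)) t
      = (1/(n:ℝ)) * (psin n b - psin n a) := by
    rw [ind_const_eq, intervalIntegral.integral_const_mul, intIoo hab (by positivity)]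
    unfold psin
    ring
  unfold ffn
  simp only [Pi.add_apply]
  rw [intervalIntegral.integral_add (ff_intgr a b) (II measurableSet_Ioo _ a b)]
  rw [intFF hab hbK, h2]
lemma psin_nonpos {n : ℕ} {t : ℝ} (h : t ≤ 0) : psin n t = 0 := by
  unfold psin
  have h2 : (0:ℝ) ≤ 4*(n:ℝ)+2 := by positivity
  rw [min_eq_left (by linarith), min_eq_left h]
  ring

lemma psin_mid {n : ℕ} {t : ℝ} (h0 : 0 ≤ t) (h1 : t ≤ 4*(n:ℝ)+2) : psin n t = t := by
  unfold psin
  rw [min_eq_left h1, min_eq_right h0]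
  ring

lemma psin_top {n : ℕ} {t : ℝ} (h : 4*(n:ℝ)+2 ≤ t) : psin n t = 4*(n:ℝ)+2 := by
  unfold psin
  have h2 : (0:ℝ) ≤ 4*(n:ℝ)+2 := by positivity
  rw [min_eq_right (by linarith), min_eq_right (by linarith)]
  ring

lemma Kb (b : ℝ) : b ≤ 4*((⌈b⌉₊:ℕ):ℝ)+2 := by
  have h1 := Nat.le_ceil b
  have h2 : (0:ℝ) ≤ ((⌈b⌉₊:ℕ):ℝ) := Nat.cast_nonneg _
  linarith

lemma FF_at {K k : ℕ} (hk : k ≤ K) {b : ℝ} (h0 : 4*(k:ℝ) ≤ b) (h2 : b ≤ 4*(k:ℝ)+2) :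
    FF K b = 2*(k:ℝ) := by
  have h := FF_anchor (K := K) hk (r := b - 4*(k:ℝ)) (by linarith) (by linarith)
  rwa [show 4*(k:ℝ) + (b - 4*(k:ℝ)) = b from by ring] at h

lemma tail_eq {n : ℕ} {a c : ℝ} (hac : a ≤ c) (hc : c ≤ 0) :
    ∫ t in a..c, ffn n t = c - a := by
  rw [intFFn (K := 0) hac (by norm_num; linarith)]
  rw [min_eq_left hc, min_eq_left (by linarith : a ≤ (0:ℝ))]
  rw [FF_low 0 (by linarith), FF_low 0 (by linarith), psin_nonpos hc,
    psin_nonpos (by linarith)]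
  ring

lemma gap_flat {n k : ℕ} (hk : k ≤ n) {a b : ℝ} (h1 : 4*(k:ℝ) ≤ a) (hab : a ≤ b)
    (h2 : b ≤ 4*(k:ℝ)+2) : ∫ t in a..b, ffn n t = (b-a)/(n:ℝ) := by
  have hkn : (k:ℝ) ≤ (n:ℝ) := Nat.cast_le.2 hk
  have hk0 : (0:ℝ) ≤ (k:ℝ) := Nat.cast_nonneg _
  rw [intFFn (K := n) hab (by linarith)]
  rw [min_eq_right (by linarith : (0:ℝ) ≤ b), min_eq_right (by linarith : (0:ℝ) ≤ a)]
  rw [FF_at hk (by linarith) h2, FF_at hk h1 (by linarith),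
    psin_mid (by linarith) (by linarith), psin_mid (by linarith) (by linarith)]
  ring

lemma bump_eq {n k : ℕ} (h1 : 1 ≤ k) (hk : k ≤ n) :
    ∫ t in (4*(k:ℝ)-2)..(4*(k:ℝ)), ffn n t = 2 + 2/(n:ℝ) := by
  have hkn : (k:ℝ) ≤ (n:ℝ) := Nat.cast_le.2 hk
  have hk1 : (1:ℝ) ≤ (k:ℝ) := by exact_mod_cast h1
  rw [intFFn (K := n) (by linarith) (by linarith)]
  have hFb : FF n (4*(k:ℝ)) = 2*(k:ℝ) := FF_at hk (le_refl _) (by linarith)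
  have hFa : FF n (4*(k:ℝ)-2) = 2*((k:ℝ)-1) := by
    have hj : (((k-1:ℕ)):ℝ) = (k:ℝ) - 1 := by
      have := Nat.cast_sub h1 (R := ℝ)
      simpa using this
    have h := FF_anchor (K := n) (j := k-1) (by omega) (r := 2) (by norm_num) (le_refl _)
    rw [hj] at h
    rwa [show 4*((k:ℝ)-1) + 2 = 4*(k:ℝ) - 2 from by ring] at h
  rw [hFb, hFa,
    min_eq_right (by linarith : (0:ℝ) ≤ 4*(k:ℝ)), min_eq_right (by linarith : (0:ℝ) ≤ 4*(k:ℝ)-2),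
    psin_mid (by linarith) (by linarith), psin_mid (by linarith) (by linarith)]
  field_simp
  ring

lemma flat_right {n : ℕ} {s b : ℝ} (hs : 4*(n:ℝ)+2 ≤ s) (hsb : s ≤ b) :
    ∫ t in s..b, ffn n t ≤ b - s := by
  rw [intFFn (K := ⌈b⌉₊) hsb (Kb b)]
  have hlip := FF_lip (⌈b⌉₊) hsb
  rw [min_eq_right (by linarith : (0:ℝ) ≤ b), min_eq_right (by linarith : (0:ℝ) ≤ s),
    psin_top (by linarith), psin_top hs]
  simp only [sub_self, mul_zero]
  linarith

lemma R_small {n k : ℕ} (hn : 3 ≤ n) (hk : k ≤ n) {b : ℝ} (hb : 4*(k:ℝ)+1 ≤ b)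
    (hb2 : b ≤ 4*(n:ℝ)+2) :
    ∫ t in (4*(k:ℝ)+1)..b, ffn n t ≤ b - (4*(k:ℝ)+1) := by
  have hn3 : (3:ℝ) ≤ (n:ℝ) := by exact_mod_cast hn
  have hkn : (k:ℝ) ≤ (n:ℝ) := Nat.cast_le.2 hk
  have hk0 : (0:ℝ) ≤ (k:ℝ) := Nat.cast_nonneg _
  have hn0 : (0:ℝ) < (n:ℝ) := by linarith
  have hε : 1/(n:ℝ) ≤ 1/3 := by
    rw [div_le_div_iff₀ hn0 (by norm_num)]; linarith
  have hε0 : (0:ℝ) ≤ 1/(n:ℝ) := by positivity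
  rw [intFFn (K := n) hb (by linarith)]
  rw [min_eq_right (by linarith : (0:ℝ) ≤ b),
    min_eq_right (by linarith : (0:ℝ) ≤ 4*(k:ℝ)+1),
    psin_mid (by linarith) hb2, psin_mid (by linarith) (by linarith)]
  have hFc : FF n (4*(k:ℝ)+1) = 2*(k:ℝ) := FF_anchor hk (by norm_num) (by norm_num)
  rw [hFc]
  rcases le_or_gt b (4*(k:ℝ)+2) with h1 | h1
  · rw [FF_at hk (by linarith) h1]
    have hm : (1/(n:ℝ)) * (b - (4*(k:ℝ)+1)) ≤ 1 * (b - (4*(k:ℝ)+1)) :=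
      mul_le_mul_of_nonneg_right (by linarith) (by linarith)
    linarith
  rcases le_or_gt b (4*(k:ℝ)+4) with h2 | h2
  · have hF2 : FF n (4*(k:ℝ)+2) = 2*(k:ℝ) := FF_anchor hk (by norm_num) (by norm_num)
    have hlip := FF_lip n (show 4*(k:ℝ)+2 ≤ b by linarith)
    have hm : (1/(n:ℝ)) * (b - (4*(k:ℝ)+1)) ≤ (1/3) * 3 :=
      mul_le_mul hε (by linarith) (by linarith) (by norm_num)
    linarith
  · have hFb : FF n b ≤ b/2 := FF_le_half (by linarith) (by linarith)
    have hm : (1/(n:ℝ)) * (b - (4*(k:ℝ)+1)) ≤ (1/3) * (b - (4*(k:ℝ)+1)) :=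
      mul_le_mul_of_nonneg_right hε (by linarith)
    linarith

lemma R_part {n k : ℕ} (hn : 3 ≤ n) (hk : k ≤ n) {b : ℝ} (hb : 4*(k:ℝ)+1 ≤ b) :
    ∫ t in (4*(k:ℝ)+1)..b, ffn n t ≤ b - (4*(k:ℝ)+1) := by
  have hkn : (k:ℝ) ≤ (n:ℝ) := Nat.cast_le.2 hk
  rcases le_or_gt b (4*(n:ℝ)+2) with h | h
  · exact R_small hn hk hb h
  · have hT : 4*(k:ℝ)+1 ≤ 4*(n:ℝ)+2 := by linarith
    rw [← intervalIntegral.integral_add_adjacent_intervals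
      (ffn_intgr n (4*(k:ℝ)+1) (4*(n:ℝ)+2)) (ffn_intgr n (4*(n:ℝ)+2) b)]
    have h1 := R_small hn hk hT (le_refl _)
    have h2 := flat_right (n := n) (le_refl _) h.le
    linarith

lemma L_part {n k : ℕ} (hn : 3 ≤ n) (hk : k ≤ n) {a : ℝ} (ha : a ≤ 4*(k:ℝ)+1) :
    ∫ t in a..(4*(k:ℝ)+1), ffn n t ≤ (4*(k:ℝ)+1) - a := by
  have hn3 : (3:ℝ) ≤ (n:ℝ) := by exact_mod_cast hn
  have hkn : (k:ℝ) ≤ (n:ℝ) := Nat.cast_le.2 hk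
  have hk0 : (0:ℝ) ≤ (k:ℝ) := Nat.cast_nonneg _
  have hn0 : (0:ℝ) < (n:ℝ) := by linarith
  have hε : 1/(n:ℝ) ≤ 1/3 := by
    rw [div_le_div_iff₀ hn0 (by norm_num)]; linarith
  have hε0 : (0:ℝ) ≤ 1/(n:ℝ) := by positivity
  have hFc : FF n (4*(k:ℝ)+1) = 2*(k:ℝ) := FF_anchor hk (by norm_num) (by norm_num)
  rcases lt_or_ge a 0 with ha0 | ha0
  · rw [← intervalIntegral.integral_add_adjacent_intervals
      (ffn_intgr n a 0) (ffn_intgr n 0 (4*(k:ℝ)+1))]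
    rw [tail_eq ha0.le (le_refl _)]
    rw [intFFn (K := n) (by linarith) (by linarith)]
    rw [min_eq_right (by linarith : (0:ℝ) ≤ 4*(k:ℝ)+1), min_eq_right (le_refl (0:ℝ)),
      psin_mid (by linarith) (by linarith), psin_mid (le_refl _) (by linarith), hFc,
      FF_low n (show (0:ℝ) ≤ 2 by norm_num)]
    have hm : (1/(n:ℝ)) * (4*(k:ℝ)+1) ≤ (1/3) * (4*(k:ℝ)+1) :=
      mul_le_mul_of_nonneg_right hε (by linarith)
    linarith
  · rw [intFFn (K := n) ha (by linarith)]
    rw [min_eq_right (by linarith : (0:ℝ) ≤ 4*(k:ℝ)+1), min_eq_right ha0,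
      psin_mid (by linarith) (by linarith), psin_mid ha0 (by linarith), hFc]
    rcases le_or_gt (4*(k:ℝ)) a with h1 | h1
    · rw [FF_at hk h1 (by linarith)]
      have hm : (1/(n:ℝ)) * ((4*(k:ℝ)+1) - a) ≤ 1 * ((4*(k:ℝ)+1) - a) :=
        mul_le_mul_of_nonneg_right (by linarith) (by linarith)
      linarith
    rcases le_or_gt (4*(k:ℝ)-2) a with h2 | h2
    · have hF4 : FF n (4*(k:ℝ)) = 2*(k:ℝ) := FF_at hk (le_refl _) (by linarith)
      have hlip := FF_lip n h1.le
      have hm : (1/(n:ℝ)) * ((4*(k:ℝ)+1) - a) ≤ (1/3) * 3 :=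
        mul_le_mul hε (by linarith) (by linarith) (by norm_num)
      linarith
    · have hFa : a/2 - 1 ≤ FF n a := FF_ge (by linarith)
      have hm : (1/(n:ℝ)) * ((4*(k:ℝ)+1) - a) ≤ (1/3) * ((4*(k:ℝ)+1) - a) :=
        mul_le_mul_of_nonneg_right hε (by linarith)
      linarith

lemma core_bd {n k : ℕ} (hn : 3 ≤ n) (hk : k ≤ n) {a b : ℝ} (ha : a ≤ 4*(k:ℝ)+1)
    (hb : 4*(k:ℝ)+1 ≤ b) : ∫ t in a..b, ffn n t ≤ b - a := by
  rw [← intervalIntegral.integral_add_adjacent_intervals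
    (ffn_intgr n a (4*(k:ℝ)+1)) (ffn_intgr n (4*(k:ℝ)+1) b)]
  have h1 := L_part hn hk ha
  have h2 := R_part hn hk hb
  linarith

lemma mid_bd0 {n : ℕ} (hn : 3 ≤ n) {b : ℝ} (hb : 0 ≤ b) :
    ∫ t in (0:ℝ)..b, ffn n t ≤ b := by
  have hn3 : (3:ℝ) ≤ (n:ℝ) := by exact_mod_cast hn
  have hn0 : (0:ℝ) < (n:ℝ) := by linarith
  have hε : 1/(n:ℝ) ≤ 1/3 := by
    rw [div_le_div_iff₀ hn0 (by norm_num)]; linarith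
  have hε0 : (0:ℝ) ≤ 1/(n:ℝ) := by positivity
  rw [intFFn (K := ⌈b⌉₊) hb (Kb b)]
  have hpb : psin n b = min b (4*(n:ℝ)+2) := by
    unfold psin
    rw [min_eq_right hb]
    ring
  rw [min_eq_right hb, min_eq_right (le_refl (0:ℝ)), psin_nonpos (le_refl (0:ℝ)),
    FF_low (⌈b⌉₊) (show (0:ℝ) ≤ 2 by norm_num), hpb]
  have hm1 : min b (4*(n:ℝ)+2) ≤ b := min_le_left _ _
  have hm0 : (0:ℝ) ≤ min b (4*(n:ℝ)+2) := le_min hb (by positivity)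
  rcases le_or_gt b 2 with h1 | h1
  · rw [FF_low (⌈b⌉₊) h1]
    have := mul_le_mul_of_nonneg_right (show 1/(n:ℝ) ≤ 1 by linarith) hm0
    linarith
  rcases le_or_gt b 3 with h2 | h2
  · have hlip := FF_lip (⌈b⌉₊) h1.le
    have hF2 : FF (⌈b⌉₊) 2 = 0 := FF_low _ (le_refl _)
    have hm : (1/(n:ℝ)) * min b (4*(n:ℝ)+2) ≤ (1/3) * 3 :=
      mul_le_mul hε (by linarith) hm0 (by norm_num)
    linarith
  · have hFb : FF (⌈b⌉₊) b ≤ b/2 := FF_le_half hb (Kb b)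
    have hm : (1/(n:ℝ)) * min b (4*(n:ℝ)+2) ≤ (1/3) * b :=
      mul_le_mul hε (by linarith) hm0 (by norm_num)
    linarith

lemma left_bd {n : ℕ} (hn : 3 ≤ n) {a b : ℝ} (ha : a ≤ 0) (hab : a ≤ b) :
    ∫ t in a..b, ffn n t ≤ b - a := by
  rcases le_or_gt b 0 with hb0 | hb0
  · rw [tail_eq hab hb0]
  · rw [← intervalIntegral.integral_add_adjacent_intervals
      (ffn_intgr n a 0) (ffn_intgr n 0 b)]
    rw [tail_eq ha (le_refl _)]
    have := mid_bd0 hn hb0.le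
    linarith

lemma leftT {n : ℕ} (hn : 3 ≤ n) {a : ℝ} (ha : a ≤ 4*(n:ℝ)+2) :
    ∫ t in a..(4*(n:ℝ)+2), ffn n t ≤ (4*(n:ℝ)+2) - a := by
  have hn3 : (3:ℝ) ≤ (n:ℝ) := by exact_mod_cast hn
  have hn0 : (0:ℝ) < (n:ℝ) := by linarith
  have hε : 1/(n:ℝ) ≤ 1/3 := by
    rw [div_le_div_iff₀ hn0 (by norm_num)]; linarith
  have hε0 : (0:ℝ) ≤ 1/(n:ℝ) := by positivity
  have hFT : FF n (4*(n:ℝ)+2) = 2*(n:ℝ) := FF_anchor (le_refl n) (by norm_num) (by norm_num)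
  rcases lt_or_ge a 0 with ha0 | ha0
  · rw [← intervalIntegral.integral_add_adjacent_intervals
      (ffn_intgr n a 0) (ffn_intgr n 0 (4*(n:ℝ)+2))]
    rw [tail_eq ha0.le (le_refl _)]
    rw [intFFn (K := n) (by linarith) (le_refl _)]
    rw [min_eq_right (by linarith : (0:ℝ) ≤ 4*(n:ℝ)+2), min_eq_right (le_refl (0:ℝ)),
      psin_mid (by linarith) (le_refl _), psin_nonpos (le_refl (0:ℝ)), hFT,
      FF_low n (show (0:ℝ) ≤ 2 by norm_num)]
    have hm : (1/(n:ℝ)) * (4*(n:ℝ)+2) ≤ (1/3) * (4*(n:ℝ)+2) :=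
      mul_le_mul_of_nonneg_right hε (by linarith)
    linarith
  · rw [intFFn (K := n) ha (le_refl _)]
    rw [min_eq_right (by linarith : (0:ℝ) ≤ 4*(n:ℝ)+2), min_eq_right ha0,
      psin_mid (by linarith) (le_refl _), psin_mid ha0 ha, hFT]
    rcases le_or_gt (4*(n:ℝ)) a with h1 | h1
    · rw [FF_at (le_refl n) h1 ha]
      have hm := mul_le_mul_of_nonneg_right (show 1/(n:ℝ) ≤ 1 by linarith)
        (show (0:ℝ) ≤ (4*(n:ℝ)+2) - a by linarith)
      linarith
    rcases le_or_gt (4*(n:ℝ)-2) a with h2 | h2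
    · have hF4 : FF n (4*(n:ℝ)) = 2*(n:ℝ) := FF_at (le_refl n) (le_refl _) (by linarith)
      have hlip := FF_lip n h1.le
      have hm : (1/(n:ℝ)) * ((4*(n:ℝ)+2) - a) ≤ (1/3) * 4 :=
        mul_le_mul hε (by linarith) (by linarith) (by norm_num)
      linarith
    · have hFa : a/2 - 1 ≤ FF n a := FF_ge (by linarith)
      have hm : (1/(n:ℝ)) * ((4*(n:ℝ)+2) - a) ≤ (1/3) * ((4*(n:ℝ)+2) - a) :=
        mul_le_mul_of_nonneg_right hε (by linarith)
      linarith

lemma right_bd {n : ℕ} (hn : 3 ≤ n) {a b : ℝ} (hb : 4*(n:ℝ)+2 ≤ b) (hab : a ≤ b) :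
    ∫ t in a..b, ffn n t ≤ b - a := by
  rcases le_or_gt a (4*(n:ℝ)+2) with h | h
  · rw [← intervalIntegral.integral_add_adjacent_intervals
      (ffn_intgr n a (4*(n:ℝ)+2)) (ffn_intgr n (4*(n:ℝ)+2) b)]
    have h1 := leftT hn h
    have h2 := flat_right (n := n) (le_refl _) hb
    linarith
  · exact flat_right h.le hab
lemma ffn_abs (n : ℕ) (t : ℝ) : |ffn n t| = ffn n t := abs_of_nonneg (ffn_nonneg n t)

lemma ff_abs (t : ℝ) : |ff t| = ff t := abs_of_nonneg (ff_nonneg t)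

lemma mAvg_ffn (n : ℕ) (a b : ℝ) :
    mAvg (ffn n) a b = (∫ t in a..b, ffn n t) / (b - a) := by
  unfold mAvg
  simp only [ffn_abs]

lemma mAvg_ff (a b : ℝ) : mAvg ff a b = (∫ t in a..b, ff t) / (b - a) := by
  unfold mAvg
  simp only [ff_abs]

lemma avg_le_ffn (n : ℕ) {a b : ℝ} (hab : a < b) : mAvg (ffn n) a b ≤ 1 + 1/(n:ℝ) := by
  rw [mAvg_ffn, div_le_iff₀ (by linarith)]
  have h1 : ∫ t in a..b, ffn n t ≤ ∫ _t in a..b, (1 + 1/(n:ℝ)) :=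
    intervalIntegral.integral_mono_on hab.le (ffn_intgr n a b) intervalIntegrable_const
      (fun t _ => ffn_le n t)
  rw [intervalIntegral.integral_const, smul_eq_mul] at h1
  linarith

lemma avg_le_ff {a b : ℝ} (hab : a < b) : mAvg ff a b ≤ 1 := by
  rw [mAvg_ff, div_le_one (by linarith)]
  have h1 : ∫ t in a..b, ff t ≤ ∫ _t in a..b, (1:ℝ) :=
    intervalIntegral.integral_mono_on hab.le (ff_intgr a b) intervalIntegrable_const
      (fun t _ => ff_le_one t)
  rw [intervalIntegral.integral_const, smul_eq_mul] at h1
  linarith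

lemma S_nonempty (g : ℝ → ℝ) (x : ℝ) :
    Set.Nonempty {y | ∃ a b : ℝ, a < b ∧ a ≤ x ∧ x ≤ b ∧ y = mAvg g a b} :=
  ⟨mAvg g (x-1) (x+1), x-1, x+1, by linarith, by linarith, by linarith, rfl⟩

lemma bddS_ffn (n : ℕ) (x : ℝ) :
    BddAbove {y | ∃ a b : ℝ, a < b ∧ a ≤ x ∧ x ≤ b ∧ y = mAvg (ffn n) a b} := by
  refine ⟨1 + 1/(n:ℝ), ?_⟩
  rintro y ⟨a, b, h1, _, _, rfl⟩
  exact avg_le_ffn n h1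

lemma bddS_ff (x : ℝ) :
    BddAbove {y | ∃ a b : ℝ, a < b ∧ a ≤ x ∧ x ≤ b ∧ y = mAvg ff a b} := by
  refine ⟨1, ?_⟩
  rintro y ⟨a, b, h1, _, _, rfl⟩
  exact avg_le_ff h1

lemma le_uMax_ffn (n : ℕ) {x a b : ℝ} (h1 : a < b) (h2 : a ≤ x) (h3 : x ≤ b) :
    mAvg (ffn n) a b ≤ uMax (ffn n) x :=
  le_csSup (bddS_ffn n x) ⟨a, b, h1, h2, h3, rfl⟩

lemma le_uMax_ff {x a b : ℝ} (h1 : a < b) (h2 : a ≤ x) (h3 : x ≤ b) :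
    mAvg ff a b ≤ uMax ff x :=
  le_csSup (bddS_ff x) ⟨a, b, h1, h2, h3, rfl⟩

lemma uMax_le_of {g : ℝ → ℝ} {x C : ℝ}
    (h : ∀ a b : ℝ, a < b → a ≤ x → x ≤ b → mAvg g a b ≤ C) : uMax g x ≤ C := by
  apply csSup_le (S_nonempty g x)
  rintro y ⟨a, b, h1, h2, h3, rfl⟩
  exact h a b h1 h2 h3

lemma one_le_uMax_aux {g : ℝ → ℝ} (hnn : ∀ t, 0 ≤ g t)
    (hint : ∀ a b : ℝ, IntervalIntegrable g volume a b)
    (htail : ∀ a c : ℝ, a ≤ c → c ≤ 0 → ∫ t in a..c, g t = c - a)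
    (hbdd : ∀ x : ℝ, BddAbove {y | ∃ a b : ℝ, a < b ∧ a ≤ x ∧ x ≤ b ∧ y = mAvg g a b})
    (x : ℝ) : 1 ≤ uMax g x := by
  apply le_of_forall_pos_le_add
  intro ε hε
  set c := min x 0 with hc
  have hcx : c ≤ x := min_le_left _ _
  have hc0 : c ≤ 0 := min_le_right _ _
  set q := x - c with hq
  have hq0 : 0 ≤ q := by simp [hq]; linarith
  set T := (q+1)/ε with hT
  have hT0 : 0 < T := by positivity
  set a := c - T with ha
  have hax : a < x := by simp [ha]; nlinarith
  have havg : 1 - ε ≤ mAvg g a x := by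
    have hI : 0 ≤ ∫ t in c..x, g t :=
      intervalIntegral.integral_nonneg hcx (fun u _ => hnn u)
    have hsplit : ∫ t in a..x, g t = T + ∫ t in c..x, g t := by
      rw [← intervalIntegral.integral_add_adjacent_intervals (hint a c) (hint c x),
        htail a c (by simp [ha]; linarith) hc0]
      ring
    have habs : mAvg g a x = (∫ t in a..x, g t) / (x - a) := by
      unfold mAvg
      simp only [abs_of_nonneg (hnn _)]
    rw [habs, hsplit]
    rw [le_div_iff₀ (by linarith)]
    have hxa : x - a = T + q := by simp [ha, hq]; ring
    have hεT : ε * T = q + 1 := by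
      rw [hT]; field_simp
    nlinarith
  have hmem : mAvg g a x ≤ uMax g x := le_csSup (hbdd x) ⟨a, x, hax, hax.le, le_refl x, rfl⟩
  linarith

lemma tail_ff {a c : ℝ} (hac : a ≤ c) (hc : c ≤ 0) : ∫ t in a..c, ff t = c - a := by
  rw [intFF (K := 0) hac (by norm_num; linarith)]
  rw [min_eq_left hc, min_eq_left (by linarith : a ≤ (0:ℝ)),
    FF_low 0 (by linarith), FF_low 0 (by linarith)]
  ring

lemma one_le_uMax_ffn (n : ℕ) (x : ℝ) : 1 ≤ uMax (ffn n) x :=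
  one_le_uMax_aux (ffn_nonneg n) (ffn_intgr n) (fun _ _ h1 h2 => tail_eq h1 h2)
    (bddS_ffn n) x

lemma one_le_uMax_ff (x : ℝ) : 1 ≤ uMax ff x :=
  one_le_uMax_aux ff_nonneg ff_intgr (fun _ _ h1 h2 => tail_ff h1 h2) bddS_ff x

lemma intFF_le {a b : ℝ} (hab : a ≤ b) : ∫ t in a..b, ff t ≤ b - a := by
  rcases le_or_gt b 0 with hb0 | hb0
  · rw [tail_ff hab hb0]
  · rw [intFF hab (Kb b)]
    rcases le_or_gt a 0 with ha0 | ha0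
    · rw [min_eq_right hb0.le, min_eq_left ha0, FF_low (⌈b⌉₊) (show a ≤ 2 by linarith)]
      have h1 : FF (⌈b⌉₊) b ≤ b/2 := FF_le_half hb0.le (Kb b)
      linarith
    · rw [min_eq_right hb0.le, min_eq_right ha0.le]
      have := FF_lip (⌈b⌉₊) hab
      linarith

lemma claim3 (x : ℝ) : uMax ff x = 1 := by
  apply le_antisymm
  · apply uMax_le_of
    intro a b h1 _ _
    rw [mAvg_ff, div_le_one (by linarith)]
    exact intFF_le h1.le
  · exact one_le_uMax_ff x

lemma uMax_bump {n k : ℕ} (h1 : 1 ≤ k) (hk : k ≤ n) {x : ℝ}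
    (hx1 : 4*(k:ℝ)-2 ≤ x) (hx2 : x ≤ 4*(k:ℝ)) : uMax (ffn n) x = 1 + 1/(n:ℝ) := by
  apply le_antisymm
  · exact uMax_le_of (fun a b hab _ _ => avg_le_ffn n hab)
  · have hm := le_uMax_ffn n (show 4*(k:ℝ)-2 < 4*(k:ℝ) by linarith) hx1 hx2
    rw [mAvg_ffn, bump_eq h1 hk] at hm
    have : (2 + 2/(n:ℝ)) / (4*(k:ℝ) - (4*(k:ℝ)-2)) = 1 + 1/(n:ℝ) := by
      rw [show 4*(k:ℝ) - (4*(k:ℝ)-2) = 2 by ring]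
      ring
    rwa [this] at hm

lemma uMax_gap1 {n k : ℕ} (hn : 3 ≤ n) (hk : k ≤ n) :
    uMax (ffn n) (4*(k:ℝ)+1) = 1 := by
  apply le_antisymm
  · apply uMax_le_of
    intro a b h1 h2 h3
    rw [mAvg_ffn, div_le_one (by linarith)]
    exact core_bd hn hk h2 h3
  · exact one_le_uMax_ffn n _

lemma uMax_left {n : ℕ} (hn : 3 ≤ n) {x : ℝ} (hx : x ≤ 0) : uMax (ffn n) x = 1 := by
  apply le_antisymm
  · apply uMax_le_of
    intro a b h1 h2 _
    rw [mAvg_ffn, div_le_one (by linarith)]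
    exact left_bd hn (by linarith) h1.le
  · exact one_le_uMax_ffn n _

lemma uMax_right {n : ℕ} (hn : 3 ≤ n) {x : ℝ} (hx : 4*(n:ℝ)+2 ≤ x) :
    uMax (ffn n) x = 1 := by
  apply le_antisymm
  · apply uMax_le_of
    intro a b h1 _ h3
    rw [mAvg_ffn, div_le_one (by linarith)]
    exact right_bd hn (by linarith) h1.le
  · exact one_le_uMax_ffn n _

lemma uMax_dec {n k : ℕ} (hn : 3 ≤ n) (hk : k ≤ n) :
    AntitoneOn (uMax (ffn n)) (Set.Icc (4*(k:ℝ)) (4*(k:ℝ)+1)) := by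
  intro x hx y hy hxy
  apply csSup_le (S_nonempty _ _)
  rintro v ⟨a, b, hab, hay, hyb, rfl⟩
  rcases le_or_gt a x with hax | hax
  · exact le_uMax_ffn n hab hax (hxy.trans hyb)
  · rcases le_or_gt (4*(k:ℝ)+1) b with hbk | hbk
    · have h1 : mAvg (ffn n) a b ≤ 1 := by
        rw [mAvg_ffn, div_le_one (by linarith)]
        exact core_bd hn hk (hay.trans hy.2) hbk
      exact h1.trans (one_le_uMax_ffn n x)
    · have h1 : mAvg (ffn n) a b = 1/(n:ℝ) := by
        rw [mAvg_ffn, gap_flat hk (by linarith [hx.1]) hab.le (by linarith),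
          div_right_comm]
        rw [div_self (by linarith : b - a ≠ 0)]
      have hn0 : (0:ℝ) < (n:ℝ) := by
        have : (3:ℝ) ≤ (n:ℝ) := by exact_mod_cast hn
        linarith
      have h2 : 1/(n:ℝ) ≤ 1 := by
        rw [div_le_one hn0]
        have : (3:ℝ) ≤ (n:ℝ) := by exact_mod_cast hn
        linarith
      rw [h1]
      exact h2.trans (one_le_uMax_ffn n x)

lemma uMax_inc {n k : ℕ} (hn : 3 ≤ n) (hk : k ≤ n) :
    MonotoneOn (uMax (ffn n)) (Set.Icc (4*(k:ℝ)+1) (4*(k:ℝ)+2)) := by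
  intro x hx y hy hxy
  apply csSup_le (S_nonempty _ _)
  rintro v ⟨a, b, hab, hax, hxb, rfl⟩
  rcases le_or_gt y b with hyb | hyb
  · exact le_uMax_ffn n hab (hax.trans hxy) hyb
  · rcases le_or_gt a (4*(k:ℝ)+1) with hak | hak
    · have h1 : mAvg (ffn n) a b ≤ 1 := by
        rw [mAvg_ffn, div_le_one (by linarith)]
        exact core_bd hn hk hak (hx.1.trans hxb)
      exact h1.trans (one_le_uMax_ffn n y)
    · have h1 : mAvg (ffn n) a b = 1/(n:ℝ) := by
        rw [mAvg_ffn, gap_flat hk (by linarith) hab.le (by linarith [hy.2]),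
          div_right_comm]
        rw [div_self (by linarith : b - a ≠ 0)]
      have hn0 : (0:ℝ) < (n:ℝ) := by
        have : (3:ℝ) ≤ (n:ℝ) := by exact_mod_cast hn
        linarith
      have h2 : 1/(n:ℝ) ≤ 1 := by
        rw [div_le_one hn0]
        have : (3:ℝ) ≤ (n:ℝ) := by exact_mod_cast hn
        linarith
      rw [h1]
      exact h2.trans (one_le_uMax_ffn n y)
lemma evar_neg (f : ℝ → ℝ) (s : Set ℝ) :
    eVariationOn (fun x => -f x) s = eVariationOn f s := by
  dsimp only [eVariationOn]
  congr 1 with p : 1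
  congr 1 with i : 1
  exact edist_neg_neg _ _

lemma evar_add_le (F G : ℝ → ℝ) (s : Set ℝ) :
    eVariationOn (fun x => F x + G x) s ≤ eVariationOn F s + eVariationOn G s := by
  apply iSup_le
  rintro ⟨N, ⟨u, hu, us⟩⟩
  calc (∑ i ∈ Finset.range N, edist (F (u (i+1)) + G (u (i+1))) (F (u i) + G (u i)))
      ≤ ∑ i ∈ Finset.range N,
          (edist (F (u (i+1))) (F (u i)) + edist (G (u (i+1))) (G (u i))) :=
        Finset.sum_le_sum fun i _ => edist_add_add_le _ _ _ _
    _ = (∑ i ∈ Finset.range N, edist (F (u (i+1))) (F (u i)))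
        + ∑ i ∈ Finset.range N, edist (G (u (i+1))) (G (u i)) := Finset.sum_add_distrib
    _ ≤ _ := add_le_add (eVariationOn.sum_le (f := F) (n := N) hu us) (eVariationOn.sum_le (f := G) (n := N) hu us)

lemma evar_mono_bdd {g : ℝ → ℝ} {l U : ℝ} (hm : Monotone g) (hl : ∀ t, l ≤ g t)
    (hU : ∀ t, g t ≤ U) : eVariationOn g Set.univ ≤ ENNReal.ofReal (U - l) := by
  apply iSup_le
  rintro ⟨N, ⟨u, hu, _⟩⟩
  have h1 : ∀ i : ℕ, edist (g (u (i+1))) (g (u i)) = ENNReal.ofReal (g (u (i+1)) - g (u i)) := by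
    intro i
    rw [edist_dist, Real.dist_eq, abs_of_nonneg (sub_nonneg.2 (hm (hu (Nat.le_succ i)) ))]
  calc (∑ i ∈ Finset.range N, edist (g (u (i+1))) (g (u i)))
      = ∑ i ∈ Finset.range N, ENNReal.ofReal (g (u (i+1)) - g (u i)) :=
        Finset.sum_congr rfl fun i _ => h1 i
    _ = ENNReal.ofReal (∑ i ∈ Finset.range N, (g (u (i+1)) - g (u i))) := by
        rw [ENNReal.ofReal_sum_of_nonneg]
        intro i _
        exact sub_nonneg.2 (hm (hu (Nat.le_succ i)))
    _ = ENNReal.ofReal (g (u N) - g (u 0)) := by rw [Finset.sum_range_sub fun i => g (u i)]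
    _ ≤ ENNReal.ofReal (U - l) := ENNReal.ofReal_le_ofReal (by linarith [hU (u N), hl (u 0)])

lemma evar_ind_le (n : ℕ) :
    eVariationOn ((Set.Ioo (0:ℝ) (4*(n:ℝ)+2)).indicator (fun _ => 1/(n:ℝ))) Set.univ
      ≤ ENNReal.ofReal (2/(n:ℝ)) := by
  have hc : (0:ℝ) ≤ 1/(n:ℝ) := by positivity
  have hdec : (Set.Ioo (0:ℝ) (4*(n:ℝ)+2)).indicator (fun _ => 1/(n:ℝ))
      = fun x => (Set.Ioi (0:ℝ)).indicator (fun _ => 1/(n:ℝ)) x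
        + (-((Set.Ici (4*(n:ℝ)+2)).indicator (fun _ => 1/(n:ℝ)) x)) := by
    funext t
    by_cases h1 : (0:ℝ) < t
    · by_cases h2 : t < 4*(n:ℝ)+2
      · rw [Set.indicator_of_mem (show t ∈ Set.Ioo (0:ℝ) (4*(n:ℝ)+2) from ⟨h1, h2⟩),
          Set.indicator_of_mem (show t ∈ Set.Ioi (0:ℝ) from h1),
          Set.indicator_of_notMem (show t ∉ Set.Ici (4*(n:ℝ)+2) from not_le.2 h2)]
        ring
      · rw [Set.indicator_of_notMem (show t ∉ Set.Ioo (0:ℝ) (4*(n:ℝ)+2) from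
            fun hm => h2 hm.2),
          Set.indicator_of_mem (show t ∈ Set.Ioi (0:ℝ) from h1),
          Set.indicator_of_mem (show t ∈ Set.Ici (4*(n:ℝ)+2) from not_lt.1 h2)]
        ring
    · rw [Set.indicator_of_notMem (show t ∉ Set.Ioo (0:ℝ) (4*(n:ℝ)+2) from
          fun hm => h1 hm.1),
        Set.indicator_of_notMem (show t ∉ Set.Ioi (0:ℝ) from h1),
        Set.indicator_of_notMem (show t ∉ Set.Ici (4*(n:ℝ)+2) from
          fun hm => h1 (lt_of_lt_of_le (by positivity : (0:ℝ) < 4*(n:ℝ)+2) hm))]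
      ring
  rw [hdec]
  refine le_trans (evar_add_le _ _ _) ?_
  have e1 : eVariationOn ((Set.Ioi (0:ℝ)).indicator (fun _ => 1/(n:ℝ))) Set.univ
      ≤ ENNReal.ofReal (1/(n:ℝ)) := by
    have := evar_mono_bdd (g := (Set.Ioi (0:ℝ)).indicator (fun _ => 1/(n:ℝ))) (l := 0)
      (U := 1/(n:ℝ)) ?_ ?_ ?_
    · simpa using this
    · intro x y hxy
      by_cases hx : x ∈ Set.Ioi (0:ℝ)
      · rw [Set.indicator_of_mem hx, Set.indicator_of_mem (show y ∈ Set.Ioi (0:ℝ) from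
          lt_of_lt_of_le hx hxy)]
      · rw [Set.indicator_of_notMem hx]
        exact Set.indicator_nonneg (fun _ _ => hc) y
    · exact fun t => Set.indicator_nonneg (fun _ _ => hc) t
    · intro t
      by_cases ht : t ∈ Set.Ioi (0:ℝ)
      · rw [Set.indicator_of_mem ht]
      · rw [Set.indicator_of_notMem ht]; exact hc
  have e2 : eVariationOn (fun x => -((Set.Ici (4*(n:ℝ)+2)).indicator (fun _ => 1/(n:ℝ)) x))
      Set.univ ≤ ENNReal.ofReal (1/(n:ℝ)) := by
    rw [evar_neg]
    have := evar_mono_bdd (g := (Set.Ici (4*(n:ℝ)+2)).indicator (fun _ => 1/(n:ℝ))) (l := 0)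
      (U := 1/(n:ℝ)) ?_ ?_ ?_
    · simpa using this
    · intro x y hxy
      by_cases hx : x ∈ Set.Ici (4*(n:ℝ)+2)
      · rw [Set.indicator_of_mem hx, Set.indicator_of_mem (show y ∈ Set.Ici (4*(n:ℝ)+2) from
          le_trans hx hxy)]
      · rw [Set.indicator_of_notMem hx]
        exact Set.indicator_nonneg (fun _ _ => hc) y
    · exact fun t => Set.indicator_nonneg (fun _ _ => hc) t
    · intro t
      by_cases ht : t ∈ Set.Ici (4*(n:ℝ)+2)
      · rw [Set.indicator_of_mem ht]
      · rw [Set.indicator_of_notMem ht]; exact hc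
  calc eVariationOn ((Set.Ioi (0:ℝ)).indicator (fun _ => 1/(n:ℝ))) Set.univ
        + eVariationOn (fun x => -((Set.Ici (4*(n:ℝ)+2)).indicator (fun _ => 1/(n:ℝ)) x))
          Set.univ
      ≤ ENNReal.ofReal (1/(n:ℝ)) + ENNReal.ofReal (1/(n:ℝ)) := add_le_add e1 e2
    _ = ENNReal.ofReal (2/(n:ℝ)) := by
        rw [← ENNReal.ofReal_add hc hc]
        congr 1
        ring
lemma icc_add (g : ℝ → ℝ) {a b c : ℝ} (hab : a ≤ b) (hbc : b ≤ c) :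
    eVariationOn g (Set.Icc a c) = eVariationOn g (Set.Icc a b) + eVariationOn g (Set.Icc b c) := by
  have h := eVariationOn.Icc_add_Icc g (s := Set.univ) hab hbc (Set.mem_univ b)
  simpa [Set.univ_inter] using h.symm

lemma evar_const_on {g : ℝ → ℝ} {s : Set ℝ} {c : ℝ} (h : ∀ x ∈ s, g x = c) :
    eVariationOn g s = 0 := by
  apply eVariationOn.constant_on
  rintro _ ⟨x, hx, rfl⟩ _ ⟨y, hy, rfl⟩
  rw [h x hx, h y hy]

lemma evar_mono_Icc {g : ℝ → ℝ} {p q : ℝ} (hpq : p ≤ q) (h : MonotoneOn g (Set.Icc p q)) :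
    eVariationOn g (Set.Icc p q) ≤ ENNReal.ofReal (g q - g p) := by
  have := MonotoneOn.eVariationOn_le h (Set.left_mem_Icc.2 hpq) (Set.right_mem_Icc.2 hpq)
  simpa [Set.inter_self] using this

lemma evar_anti_Icc {g : ℝ → ℝ} {p q : ℝ} (hpq : p ≤ q) (h : AntitoneOn g (Set.Icc p q)) :
    eVariationOn g (Set.Icc p q) ≤ ENNReal.ofReal (g p - g q) := by
  have hmono : MonotoneOn (fun x => -g x) (Set.Icc p q) := fun x hx y hy hxy =>
    neg_le_neg (h hx hy hxy)
  have h2 := evar_mono_Icc hpq hmono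
  rw [evar_neg] at h2
  calc eVariationOn g (Set.Icc p q) ≤ ENNReal.ofReal (-g q - -g p) := h2
    _ = ENNReal.ofReal (g p - g q) := by ring_nf

-- the function uMax (ffn n) - 1 restricted facts
lemma gg_bounds {n : ℕ} (hn : 3 ≤ n) (x : ℝ) :
    0 ≤ uMax (ffn n) x - 1 ∧ uMax (ffn n) x - 1 ≤ 1 := by
  constructor
  · linarith [one_le_uMax_ffn n x]
  · have h1 : uMax (ffn n) x ≤ 1 + 1/(n:ℝ) := uMax_le_of (fun a b hab _ _ => avg_le_ffn n hab)
    have hn3 : (3:ℝ) ≤ (n:ℝ) := by exact_mod_cast hn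
    have : 1/(n:ℝ) ≤ 1 := by
      rw [div_le_one (by linarith)]
      linarith
    linarith

lemma evar_piece_dec {n k : ℕ} (hn : 3 ≤ n) (hk : k ≤ n) :
    eVariationOn (fun x => uMax (ffn n) x - 1) (Set.Icc (4*(k:ℝ)) (4*(k:ℝ)+1))
      ≤ ENNReal.ofReal 1 := by
  have hanti : AntitoneOn (fun x => uMax (ffn n) x - 1) (Set.Icc (4*(k:ℝ)) (4*(k:ℝ)+1)) :=
    fun x hx y hy hxy => by
      dsimp only
      have := uMax_dec hn hk hx hy hxy
      linarith
  refine le_trans (evar_anti_Icc (by linarith) hanti) (ENNReal.ofReal_le_ofReal ?_)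
  have h1 := gg_bounds hn (4*(k:ℝ))
  have h2 := gg_bounds hn (4*(k:ℝ)+1)
  linarith [h1.2, h2.1]

lemma evar_piece_inc {n k : ℕ} (hn : 3 ≤ n) (hk : k ≤ n) :
    eVariationOn (fun x => uMax (ffn n) x - 1) (Set.Icc (4*(k:ℝ)+1) (4*(k:ℝ)+2))
      ≤ ENNReal.ofReal 1 := by
  have hmono : MonotoneOn (fun x => uMax (ffn n) x - 1) (Set.Icc (4*(k:ℝ)+1) (4*(k:ℝ)+2)) :=
    fun x hx y hy hxy => by
      dsimp only
      have := uMax_inc hn hk hx hy hxy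
      linarith
  refine le_trans (evar_mono_Icc (by linarith) hmono) (ENNReal.ofReal_le_ofReal ?_)
  have h1 := gg_bounds hn (4*(k:ℝ)+1)
  have h2 := gg_bounds hn (4*(k:ℝ)+2)
  linarith [h1.1, h2.2]

lemma evar_piece_bump {n k : ℕ} (hn : 3 ≤ n) (hk1 : k+1 ≤ n) :
    eVariationOn (fun x => uMax (ffn n) x - 1) (Set.Icc (4*(k:ℝ)+2) (4*(k:ℝ)+4)) = 0 := by
  apply evar_const_on (c := 1/(n:ℝ))
  intro x hx
  have hcast : 4*((k+1:ℕ):ℝ) - 2 = 4*(k:ℝ)+2 := by push_cast; ring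
  have hcast2 : 4*((k+1:ℕ):ℝ) = 4*(k:ℝ)+4 := by push_cast; ring
  have := uMax_bump (n := n) (k := k+1) (by omega) hk1
    (x := x) (by rw [hcast]; exact hx.1) (by rw [hcast2]; exact hx.2)
  rw [this]
  ring

lemma evar_chain {n : ℕ} (hn : 3 ≤ n) :
    ∀ k : ℕ, k ≤ n → eVariationOn (fun x => uMax (ffn n) x - 1) (Set.Icc 0 (4*(k:ℝ)+2))
      ≤ ENNReal.ofReal (3*(k:ℝ)+3) := by
  intro k
  induction k with
  | zero =>
    intro _
    have hsplit := icc_add (fun x => uMax (ffn n) x - 1) (show (0:ℝ) ≤ 1 by norm_num)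
      (show (1:ℝ) ≤ 2 by norm_num)
    have h1 : eVariationOn (fun x => uMax (ffn n) x - 1) (Set.Icc (0:ℝ) 1)
        ≤ ENNReal.ofReal 1 := by
      have := evar_piece_dec hn (Nat.zero_le n)
      simpa using this
    have h2 : eVariationOn (fun x => uMax (ffn n) x - 1) (Set.Icc (1:ℝ) 2)
        ≤ ENNReal.ofReal 1 := by
      have := evar_piece_inc hn (Nat.zero_le n)
      simpa using this
    rw [show ((4:ℝ)*((0:ℕ):ℝ)+2) = 2 by norm_num, hsplit]
    calc _ ≤ ENNReal.ofReal 1 + ENNReal.ofReal 1 := add_le_add h1 h2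
      _ = ENNReal.ofReal 2 := by rw [← ENNReal.ofReal_add] <;> norm_num
      _ ≤ _ := ENNReal.ofReal_le_ofReal (by push_cast; norm_num)
  | succ k ih =>
    intro hk1
    have hk : k ≤ n := by omega
    have hc1 : (4:ℝ)*((k+1:ℕ):ℝ)+2 = 4*(k:ℝ)+6 := by push_cast; ring
    rw [hc1]
    have hs1 := icc_add (fun x => uMax (ffn n) x - 1)
      (show (0:ℝ) ≤ 4*(k:ℝ)+2 by positivity) (show (4:ℝ)*(k:ℝ)+2 ≤ 4*(k:ℝ)+6 by linarith)
    have hs2 := icc_add (fun x => uMax (ffn n) x - 1)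
      (show (4:ℝ)*(k:ℝ)+2 ≤ 4*(k:ℝ)+4 by linarith) (show (4:ℝ)*(k:ℝ)+4 ≤ 4*(k:ℝ)+6 by linarith)
    have hs3 := icc_add (fun x => uMax (ffn n) x - 1)
      (show (4:ℝ)*(k:ℝ)+4 ≤ 4*(k:ℝ)+5 by linarith) (show (4:ℝ)*(k:ℝ)+5 ≤ 4*(k:ℝ)+6 by linarith)
    rw [hs1, hs2, hs3]
    have hb := evar_piece_bump hn hk1
    have hcast : 4*((k+1:ℕ):ℝ) = 4*(k:ℝ)+4 := by push_cast; ring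
    have hd : eVariationOn (fun x => uMax (ffn n) x - 1) (Set.Icc (4*(k:ℝ)+4) (4*(k:ℝ)+5))
        ≤ ENNReal.ofReal 1 := by
      have := evar_piece_dec hn hk1
      rw [hcast] at this
      convert this using 3 <;> ring
    have hi : eVariationOn (fun x => uMax (ffn n) x - 1) (Set.Icc (4*(k:ℝ)+5) (4*(k:ℝ)+6))
        ≤ ENNReal.ofReal 1 := by
      have := evar_piece_inc hn hk1
      rw [hcast] at this
      convert this using 3 <;> ring
    calc _ ≤ ENNReal.ofReal (3*(k:ℝ)+3) + (0 + (ENNReal.ofReal 1 + ENNReal.ofReal 1)) := by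
          refine add_le_add (ih hk) ?_
          rw [hb]
          exact add_le_add le_rfl (add_le_add hd hi)
      _ ≤ ENNReal.ofReal (3*((k+1:ℕ):ℝ)+3) := by
          rw [zero_add, ← ENNReal.ofReal_add (by norm_num) (by norm_num),
            ← ENNReal.ofReal_add (by positivity) (by norm_num)]
          exact ENNReal.ofReal_le_ofReal (by push_cast; linarith)

lemma evar_upper {n : ℕ} (hn : 3 ≤ n) :
    eVariationOn (fun x => uMax (ffn n) x - 1) Set.univ ≤ ENNReal.ofReal (3*(n:ℝ)+3) := by
  have hT0 : (0:ℝ) ≤ 4*(n:ℝ)+2 := by positivity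
  have hu1 : (Set.univ : Set ℝ) = Set.Iic (0:ℝ) ∪ Set.Ici (0:ℝ) := (Set.Iic_union_Ici).symm
  have hu2 : (Set.Ici (0:ℝ)) = Set.Icc (0:ℝ) (4*(n:ℝ)+2) ∪ Set.Ici (4*(n:ℝ)+2) :=
    (Set.Icc_union_Ici_eq_Ici hT0).symm
  rw [hu1, eVariationOn.union _ isGreatest_Iic isLeast_Ici, hu2,
    eVariationOn.union _ ⟨Set.right_mem_Icc.2 hT0, fun y hy => hy.2⟩
      ⟨Set.self_mem_Ici, fun y hy => hy⟩]
  have hleft : eVariationOn (fun x => uMax (ffn n) x - 1) (Set.Iic 0) = 0 :=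
    evar_const_on (c := 0) (fun x hx => by rw [uMax_left hn hx]; ring)
  have hright : eVariationOn (fun x => uMax (ffn n) x - 1) (Set.Ici (4*(n:ℝ)+2)) = 0 :=
    evar_const_on (c := 0) (fun x hx => by rw [uMax_right hn hx]; ring)
  rw [hleft, hright, zero_add, add_zero]
  exact evar_chain hn n (le_refl n)

lemma evar_lower {n : ℕ} (hn : 3 ≤ n) :
    (2:ENNReal) ≤ eVariationOn (fun x => uMax (ffn n) x - 1) Set.univ := by
  have hn3 : (3:ℝ) ≤ (n:ℝ) := by exact_mod_cast hn
  have hn0 : (0:ℝ) < (n:ℝ) := by linarith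
  set g : ℝ → ℝ := fun x => uMax (ffn n) x - 1 with hg
  set u : ℕ → ℝ := fun i => 1 + 2*(i:ℝ) with hudef
  have hu : Monotone u := by
    intro i j hij
    have : (i:ℝ) ≤ (j:ℝ) := Nat.cast_le.2 hij
    simp only [hudef]
    linarith
  have hsum := eVariationOn.sum_le (f := g) (n := 2*n) hu (fun i => Set.mem_univ (u i))
  refine le_trans ?_ hsum
  have hg1 : ∀ j : ℕ, j ≤ n → g (4*(j:ℝ)+1) = 0 := by
    intro j hj
    simp only [hg]
    rw [uMax_gap1 hn hj]
    ring
  have hg3 : ∀ j : ℕ, j+1 ≤ n → g (4*(j:ℝ)+3) = 1/(n:ℝ) := by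
    intro j hj
    simp only [hg]
    have hc1 : 4*((j+1:ℕ):ℝ)-2 ≤ 4*(j:ℝ)+3 := by push_cast; linarith
    have hc2 : 4*(j:ℝ)+3 ≤ 4*((j+1:ℕ):ℝ) := by push_cast; linarith
    rw [uMax_bump (by omega) hj hc1 hc2]
    ring
  have hval : ∀ i ∈ Finset.range (2*n), edist (g (u (i+1))) (g (u i))
      = ENNReal.ofReal (1/(n:ℝ)) := by
    intro i hi
    have hin : i < 2*n := Finset.mem_range.1 hi
    rcases Nat.even_or_odd i with ⟨j, hj⟩ | ⟨j, hj⟩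
    · have hu_i : u i = 4*(j:ℝ)+1 := by
        simp only [hudef]; rw [hj]; push_cast; ring
      have hu_i1 : u (i+1) = 4*(j:ℝ)+3 := by
        simp only [hudef]; rw [hj]; push_cast; ring
      rw [hu_i, hu_i1, hg1 j (by omega), hg3 j (by omega)]
      rw [edist_dist, Real.dist_eq]
      congr 1
      rw [sub_zero, abs_of_nonneg (by positivity)]
    · have hu_i : u i = 4*(j:ℝ)+3 := by
        simp only [hudef]; rw [hj]; push_cast; ring
      have hu_i1 : u (i+1) = 4*((j+1:ℕ):ℝ)+1 := by
        simp only [hudef]; rw [hj]; push_cast; ring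
      rw [hu_i, hu_i1, hg3 j (by omega), hg1 (j+1) (by omega)]
      rw [edist_dist, Real.dist_eq]
      congr 1
      rw [zero_sub, abs_neg, abs_of_nonneg (by positivity)]
  rw [Finset.sum_congr rfl hval, Finset.sum_const, Finset.card_range, nsmul_eq_mul]
  have h1 : ((2*n : ℕ) : ENNReal) = ENNReal.ofReal ((2*n : ℕ) : ℝ) := by
    rw [ENNReal.ofReal_natCast]
  rw [h1, ← ENNReal.ofReal_mul (by positivity)]
  have h2 : ((2*n : ℕ) : ℝ) * (1/(n:ℝ)) = 2 := by
    push_cast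
    field_simp
  rw [h2]
  simp

theorem stmt19 (A : Set ℝ) (hA : A = ⋃ k : ℕ, Set.Ioo (4 * (k : ℝ) + 2) (4 * (k : ℝ) + 4))
    (f : ℝ → ℝ) (hf : f = Set.indicator (Set.Iio (0:ℝ) ∪ A) (fun _ => (1:ℝ)))
    (fn : ℕ → ℝ → ℝ)
    (hfn : ∀ n, fn n = f + Set.indicator (Set.Ioo (0:ℝ) (4 * (n : ℝ) + 2)) (fun _ => 1 / (n : ℝ))) :
    Tendsto (fun n => bvNorm (fn n - f)) atTop (𝓝 0) ∧
    ¬ Tendsto (fun n => bvNorm (uMax (fn n) - uMax f)) atTop (𝓝 0) ∧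
    (∀ x : ℝ, uMax f x = 1) ∧
    (∀ n : ℕ, 1 ≤ n → ∀ k : ℕ, 1 ≤ k → k ≤ n →
      uMax (fn n) (4 * (k : ℝ) - 1) = 1 + 1 / (n : ℝ)) ∧
    (∀ n : ℕ, 3 ≤ n → ∀ k : ℕ, k ≤ n →
      uMax (fn n) (4 * (k : ℝ) + 1) ≤ 1) ∧
    (∀ n : ℕ, 3 ≤ n → 2 ≤ eVariationOn (uMax (fn n) - uMax f) Set.univ) := by
  have hf' : f = ff := by rw [hf, hA]; rfl
  have hfn' : ∀ m : ℕ, fn m = ffn m := fun m => by rw [hfn m, hf']; rfl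
  have hgg : ∀ m : ℕ, uMax (fn m) - uMax f = fun x => uMax (ffn m) x - 1 := by
    intro m
    funext x
    rw [Pi.sub_apply, hfn' m, hf', claim3 x]
  have hdiff : ∀ m : ℕ, fn m - f
      = (Set.Ioo (0:ℝ) (4*(m:ℝ)+2)).indicator (fun _ => 1/(m:ℝ)) := by
    intro m
    funext x
    rw [Pi.sub_apply, hfn m, Pi.add_apply]
    ring
  refine ⟨?_, ?_, ?_, ?_, ?_, ?_⟩
  · -- claim 1
    apply squeeze_zero (g := fun m : ℕ => 2/(m:ℝ))
    · intro m
      exact add_nonneg (abs_nonneg _) ENNReal.toReal_nonneg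
    · intro m
      have hlim : Tendsto (fn m - f) atBot (𝓝 0) := by
        have hevq : (fun _ : ℝ => (0:ℝ)) =ᶠ[atBot] (fn m - f) := by
          rw [Filter.EventuallyEq, eventually_atBot]
          refine ⟨-1, fun x hx => ?_⟩
          rw [hdiff m]
          exact (Set.indicator_of_notMem (fun hm => by
            have := hm.1
            linarith) _).symm
        exact Tendsto.congr' hevq tendsto_const_nhds
      have h1 : |limUnder atBot (fn m - f)| = 0 := by
        rw [hlim.limUnder_eq, abs_zero]
      have h2 : varOn (fn m - f) Set.univ ≤ 2/(m:ℝ) := by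
        unfold varOn
        rw [hdiff m]
        exact ENNReal.toReal_le_of_le_ofReal (by positivity) (evar_ind_le m)
      unfold bvNorm
      rw [h1]
      linarith
    · exact tendsto_const_div_atTop_nhds_zero_nat 2
  · -- claim 2
    intro hT
    have hev : ∀ᶠ m : ℕ in atTop, bvNorm (uMax (fn m) - uMax f) < 2 :=
      hT.eventually_lt_const (by norm_num)
    obtain ⟨m, hlt, hm3⟩ := (hev.and (eventually_ge_atTop 3)).exists
    have hne : eVariationOn (fun x => uMax (ffn m) x - 1) Set.univ ≠ ⊤ :=
      (lt_of_le_of_lt (evar_upper hm3) ENNReal.ofReal_lt_top).ne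
    have h2 : (2:ℝ) ≤ (eVariationOn (fun x => uMax (ffn m) x - 1) Set.univ).toReal := by
      have := ENNReal.toReal_mono hne (evar_lower hm3)
      simpa using this
    have hge : 2 ≤ bvNorm (uMax (fn m) - uMax f) := by
      unfold bvNorm varOn
      rw [hgg m]
      have := abs_nonneg (limUnder atBot (fun x => uMax (ffn m) x - 1))
      linarith
    linarith
  · -- claim 3
    intro x
    rw [hf']
    exact claim3 x
  · -- claim 4
    intro n _ k hk1 hkn
    rw [hfn' n]
    exact uMax_bump hk1 hkn (by linarith) (by linarith)
  · -- claim 5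
    intro n hn k hk
    rw [hfn' n]
    exact (uMax_gap1 hn hk).le
  · -- claim 6
    intro n hn
    rw [hgg n]
    exact evar_lower hn
end
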